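/- arXiv:1003.0929 — 5 statements merged into one kernel-verified Lean document; each statement's English description precedes it below -/
import Mathlib

section
/- Let ℰ be a finite set, let R ∈ {0,1}^{ℰ×ℰ} be a matrix with at most one nonzero entry per row that is nilpotent, and let 𝒮 ⊆ {0,1}^ℰ be a set of 0–1 vectors that is monotone (σ ∈ 𝒮 and σ' ≤ σ componentwise imply σ' ∈ 𝒮) and contains, for every e ∈ ℰ, the indicator vector of {e}. Then for every vector x ∈ ℝ₊^ℰ, max_{σ∈𝒮} σᵀ(I − R)x ≥ (Σ_{e∈ℰ} x_e)/|ℰ|². -/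
open Matrix

/-- For a finite set of queues `E`, a 0-1 routing matrix `R` with at
most one nonzero entry per row that is nilpotent, and a monotone schedule set
`S ⊆ {0,1}^E` containing all single-queue indicator vectors, the maximum
back-pressure weight `max_{σ∈S} σᵀ(I-R)x` over any nonnegative vector `x` is at
least `(Σ_e x_e)/|E|²`. -/
theorem max_backpressure_weight_lower_bound
    {E : Type*} [Fintype E] [DecidableEq E] [Nonempty E]
    (R : Matrix E E ℝ)
    (hR01 : ∀ e e', R e e' = 0 ∨ R e e' = 1)
    (hRrow : ∀ e e₁ e₂, R e e₁ ≠ 0 → R e e₂ ≠ 0 → e₁ = e₂)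
    (hRnil : IsNilpotent R)
    (S : Finset (E → ℝ))
    (hS01 : ∀ σ ∈ S, ∀ e, σ e = 0 ∨ σ e = 1)
    (hSmono : ∀ σ ∈ S, ∀ σ' : E → ℝ, (∀ e, σ' e = 0 ∨ σ' e = 1) →
      (∀ e, σ' e ≤ σ e) → σ' ∈ S)
    (hSsingle : ∀ e : E, (fun e' => if e' = e then (1 : ℝ) else 0) ∈ S)
    (hSne : S.Nonempty)
    (x : E → ℝ) (hx : ∀ e, 0 ≤ x e) :
    (∑ e, x e) / (Fintype.card E : ℝ) ^ 2 ≤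
      S.sup' hSne (fun σ => ∑ e, σ e * ((1 - R) *ᵥ x) e) := by
  set n := Fintype.card E with hn
  set c := S.sup' hSne (fun σ => ∑ e, σ e * ((1 - R) *ᵥ x) e) with hc
  have hnpos : 0 < n := Fintype.card_pos
  -- entries of R are nonneg
  have hRnn : ∀ e e', 0 ≤ R e e' := by
    intro e e'
    rcases hR01 e e' with h | h <;> rw [h] <;> norm_num
  -- row sums of R are ≤ 1
  have hrow : ∀ e, ∑ e', R e e' ≤ 1 := by
    intro e
    by_cases h : ∀ e', R e e' = 0
    · simp [h]
    · push_neg at h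
      obtain ⟨e₁, he₁⟩ := h
      have hsum : ∑ e', R e e' = R e e₁ := by
        refine Finset.sum_eq_single_of_mem e₁ (Finset.mem_univ _) ?_
        intro b _ hb
        by_contra hb0
        exact hb (hRrow e b e₁ hb0 he₁)
      rw [hsum]
      rcases hR01 e e₁ with h | h
      · exact absurd h he₁
      · rw [h]
  -- (1-R) *ᵥ x pointwise
  have hsub : ∀ e, ((1 - R) *ᵥ x) e = x e - (R *ᵥ x) e := by
    intro e
    simp [Matrix.sub_mulVec, Matrix.one_mulVec]
  -- zero schedule is in S, so c ≥ 0
  have hcnn : 0 ≤ c := by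
    obtain ⟨σ₀, hσ₀⟩ := hSne
    have hz : (fun _ : E => (0 : ℝ)) ∈ S := by
      refine hSmono σ₀ hσ₀ _ (fun e => Or.inl rfl) (fun e => ?_)
      rcases hS01 σ₀ hσ₀ e with h | h <;> rw [h] <;> norm_num
    have h0 := Finset.le_sup' (fun σ => ∑ e, σ e * ((1 - R) *ᵥ x) e) hz
    simp only [zero_mul, Finset.sum_const_zero] at h0
    exact h0
  -- single-queue schedules: x e - (R *ᵥ x) e ≤ c
  have hA : ∀ e, x e - (R *ᵥ x) e ≤ c := by
    intro e
    have h1 := Finset.le_sup' (fun σ => ∑ e', σ e' * ((1 - R) *ᵥ x) e') (hSsingle e)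
    have h2 : ∑ e', (if e' = e then (1 : ℝ) else 0) * ((1 - R) *ᵥ x) e'
        = ((1 - R) *ᵥ x) e := by
      simp [ite_mul]
    rw [← hsub e, ← h2]
    exact h1
  -- key induction
  have hB : ∀ m : ℕ, ∀ e, x e ≤ m * c + (R ^ m *ᵥ x) e := by
    intro m
    induction m with
    | zero => intro e; simp [Matrix.one_mulVec]
    | succ m ih =>
      intro e
      have h1 : x e ≤ c + (R *ᵥ x) e := by
        have := hA e; linarith
      have h2 : (R *ᵥ x) e ≤ m * c + (R ^ (m + 1) *ᵥ x) e := by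
        have hv : (R *ᵥ x) e = ∑ e', R e e' * x e' := by
          simp [Matrix.mulVec, dotProduct]
        have hv' : (R ^ (m + 1) *ᵥ x) e = ∑ e', R e e' * (R ^ m *ᵥ x) e' := by
          have : R ^ (m + 1) *ᵥ x = R *ᵥ (R ^ m *ᵥ x) := by
            rw [Matrix.mulVec_mulVec, pow_succ']
          rw [this]
          simp [Matrix.mulVec, dotProduct]
        calc (R *ᵥ x) e = ∑ e', R e e' * x e' := hv
          _ ≤ ∑ e', R e e' * (m * c + (R ^ m *ᵥ x) e') := by
              refine Finset.sum_le_sum (fun e' _ => ?_)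
              exact mul_le_mul_of_nonneg_left (ih e') (hRnn e e')
          _ = (∑ e', R e e') * (m * c) + ∑ e', R e e' * (R ^ m *ᵥ x) e' := by
              rw [Finset.sum_mul]
              rw [← Finset.sum_add_distrib]
              congr 1
              ext e'
              ring
          _ ≤ 1 * (m * c) + (R ^ (m + 1) *ᵥ x) e := by
              rw [← hv']
              have hmc : 0 ≤ (m : ℝ) * c := by positivity
              gcongr
              exact hrow e
          _ = m * c + (R ^ (m + 1) *ᵥ x) e := by ring
      have : x e ≤ c + (m * c + (R ^ (m + 1) *ᵥ x) e) := le_trans h1 (by linarith)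
      push_cast
      linarith
  -- R ^ n = 0 via Cayley-Hamilton
  have hchar : R.charpoly = Polynomial.X ^ n := by
    have h := Matrix.isNilpotent_charpoly_sub_pow_of_isNilpotent hRnil
    rw [← sub_eq_zero]
    exact h.eq_zero
  have hRn : R ^ n = 0 := by
    have h := R.aeval_self_charpoly
    rwa [hchar, map_pow, Polynomial.aeval_X] at h
  -- conclude
  have hxe : ∀ e, x e ≤ n * c := by
    intro e
    have := hB n e
    rwa [hRn, Matrix.zero_mulVec, Pi.zero_apply, add_zero] at this
  have hsumle : ∑ e, x e ≤ (n : ℝ) ^ 2 * c := by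
    calc ∑ e, x e ≤ ∑ _e : E, (n : ℝ) * c := Finset.sum_le_sum (fun e _ => hxe e)
      _ = (n : ℝ) * ((n : ℝ) * c) := by
          rw [Finset.sum_const, Finset.card_univ]
          push_cast [hn]
          ring
      _ = (n : ℝ) ^ 2 * c := by ring
  rw [div_le_iff₀ (by positivity)]
  linarith
end

section
/- Consider a critically loaded system (Leff(ρ) = 1) and any fluid model solution on [0,T] (i.e., a trajectory satisfying only the algorithm-independent fluid equations) with flow-count and queue-length components (n(·), q(·)). Then for every t ∈ [0,T] and every critical virtual resource ζ ∈ CR(ρ), the workload satisfies w_ζ(n(0), q(0)) ≤ w_ζ(n(t), q(t)). -/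
open Matrix Filter

/-- Network data: queues `E`, flow types `F`, routing matrix, schedule set,
ingress map, arrival/departure parameters. -/
structure Network (E F : Type*) [Fintype E] [Fintype F] [DecidableEq E] where
  R : Matrix E E ℝ
  S : Finset (E → ℝ)
  iota : F → E
  ν : F → ℝ
  μ : F → ℝ
  C : ℝ
  hR01 : ∀ e e', R e e' = 0 ∨ R e e' = 1
  hRrow : ∀ e e₁ e₂, R e e₁ ≠ 0 → R e e₂ ≠ 0 → e₁ = e₂
  hRnil : IsNilpotent R
  hS01 : ∀ σ ∈ S, ∀ e, σ e = 0 ∨ σ e = 1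
  hS0 : (0 : E → ℝ) ∈ S
  hSmono : ∀ σ ∈ S, ∀ σ' : E → ℝ, (∀ e, σ' e = 0 ∨ σ' e = 1) → (∀ e, σ' e ≤ σ e) → σ' ∈ S
  hSsingle : ∀ e : E, (fun e' => if e' = e then (1 : ℝ) else 0) ∈ S
  hν : ∀ f, 0 < ν f
  hμ0 : ∀ f, 0 < μ f
  hμ1 : ∀ f, μ f < 1
  hC : ∀ f, ν f / μ f < C

namespace Network

variable {E F : Type*} [Fintype E] [Fintype F] [DecidableEq E] (N : Network E F)

/-- offered load `ρ_f = ν_f / μ_f`. -/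
noncomputable def rho : F → ℝ := fun f => N.ν f / N.μ f

/-- `Ξ = (I - Rᵀ)⁻¹`. -/
noncomputable def Xi : Matrix E E ℝ := (1 - N.R.transpose)⁻¹

/-- ingress matrix `Γ`. -/
noncomputable def Gam : Matrix E F ℝ := Matrix.of fun e f => if N.iota f = e then (1 : ℝ) else 0

/-- implied load `λ = Ξ Γ ρ`. -/
noncomputable def lamv : E → ℝ := N.Xi *ᵥ (N.Gam *ᵥ N.rho)

/-- `Π s`, the vector of service rates induced by schedule weights `s`. -/
def PiV (s : (E → ℝ) → ℝ) : E → ℝ := fun e => ∑ σ ∈ N.S, s σ * σ e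

/-- the primal LP value `PRIMAL(l)`. -/
noncomputable def PRIMAL (l : E → ℝ) : ℝ :=
  sInf { v | ∃ s : (E → ℝ) → ℝ, (∀ σ, 0 ≤ s σ) ∧ (∀ e, l e ≤ N.PiV s e) ∧
    v = ∑ σ ∈ N.S, s σ }

/-- effective load `Leff(ρ) = PRIMAL(ΞΓρ)`. -/
noncomputable def Leff : ℝ := N.PRIMAL N.lamv

/-- feasibility for the dual LP. -/
def dualFeasible (ζ : E → ℝ) : Prop :=
  (∀ e, 0 ≤ ζ e) ∧ ∀ σ ∈ N.S, ∑ e, ζ e * σ e ≤ 1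

/-- the dual LP value `DUAL(l)`. -/
noncomputable def DUAL (l : E → ℝ) : ℝ :=
  sSup { v | ∃ ζ : E → ℝ, N.dualFeasible ζ ∧ v = ∑ e, l e * ζ e }

/-- `CR(ρ)`: the critical virtual resources (optimal solutions of `DUAL(ΞΓρ)`). -/
def CR : Set (E → ℝ) :=
  { ζ | N.dualFeasible ζ ∧ ∑ e, N.lamv e * ζ e = N.DUAL N.lamv }

/-- `CR*(ρ)`: extreme points of `CR(ρ)`. -/
noncomputable def CRstar : Set (E → ℝ) := Set.extremePoints ℝ N.CR

/-- workload `w_ζ(n,q) = ζᵀ Ξ [q + Γ diag(μ)⁻¹ n]`. -/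
noncomputable def workload (ζ : E → ℝ) (n : F → ℝ) (q : E → ℝ) : ℝ :=
  ∑ e, ζ e * (N.Xi *ᵥ (q + N.Gam *ᵥ fun f => n f / N.μ f)) e

/-- cost `c(n,q) = Σ_f n_f/μ_f + Σ_e q_e`. -/
noncomputable def cost (n : F → ℝ) (q : E → ℝ) : ℝ :=
  ∑ f, n f / N.μ f + ∑ e, q e

/-- Lyapunov function `L_α(n,q)`. -/
noncomputable def Lyap (α : ℝ) (n : F → ℝ) (q : E → ℝ) : ℝ :=
  ∑ f, n f ^ (1 + α) / (N.μ f * N.rho f ^ α) + ∑ e, q e ^ (1 + α)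

/-- back-pressure weight of a schedule `σ`: `σᵀ (I - R) q^α`. -/
noncomputable def weight (α : ℝ) (q : E → ℝ) (σ : E → ℝ) : ℝ :=
  ∑ e, σ e * ((1 - N.R) *ᵥ fun e' => q e' ^ α) e

theorem S_nonempty : N.S.Nonempty := ⟨0, N.hS0⟩

/-- the maximum back-pressure weight. -/
noncomputable def maxWeight (α : ℝ) (q : E → ℝ) : ℝ :=
  N.S.sup' N.S_nonempty (N.weight α q)

/-- feasibility for problem `bALGD(n,q)`. -/
def bALGDFeas (n : F → ℝ) (q : E → ℝ) (p : (F → ℝ) × (E → ℝ)) : Prop :=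
  (∀ f, 0 ≤ p.1 f) ∧ (∀ e, 0 ≤ p.2 e) ∧
    ∀ ζ ∈ N.CRstar, N.workload ζ n q ≤ N.workload ζ p.1 p.2

/-- optimality for problem `bALGD(n,q)`. -/
def bALGDOpt (α : ℝ) (n : F → ℝ) (q : E → ℝ) (p : (F → ℝ) × (E → ℝ)) : Prop :=
  N.bALGDFeas n q p ∧ ∀ p', N.bALGDFeas n q p' → N.Lyap α p.1 p.2 ≤ N.Lyap α p'.1 p'.2

/-- the lifting map `Δ`: the unique optimal solution of `bALGD(n,q)`. -/
noncomputable def lift (α : ℝ) (p : (F → ℝ) × (E → ℝ)) : (F → ℝ) × (E → ℝ) :=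
  letI := Classical.dec (∃! p', N.bALGDOpt α p.1 p.2 p')
  if h : ∃! p', N.bALGDOpt α p.1 p.2 p' then h.choose else p

/-- the effective cost `c*(n,q)`. -/
noncomputable def effCost (n : F → ℝ) (q : E → ℝ) : ℝ :=
  sInf { v | ∃ p : (F → ℝ) × (E → ℝ), N.bALGDFeas n q p ∧ v = N.cost p.1 p.2 }

/-- the balance factor `γ(ρ)`. -/
noncomputable def balance : ℝ :=
  sInf { v | ∃ (n : F → ℝ) (q : E → ℝ) (p : (F → ℝ) × (E → ℝ)),
    (∀ f, 0 ≤ n f) ∧ (∀ e, 0 ≤ q e) ∧ N.bALGDFeas n q p ∧ N.cost n q = 1 ∧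
    v = N.cost p.1 p.2 }

/-- the scheduling capacity region `Λ`. -/
def LamSet : Set (E → ℝ) :=
  { l | (∀ e, 0 ≤ l e) ∧ ∃ s : (E → ℝ) → ℝ, (∀ σ, 0 ≤ s σ) ∧
    (∀ e, l e ≤ N.PiV s e) ∧ ∑ σ ∈ N.S, s σ ≤ 1 }

end Network

/-- ℓ1-distance between two states. -/
noncomputable def dist1 {E F : Type*} [Fintype E] [Fintype F]
    (p p' : (F → ℝ) × (E → ℝ)) : ℝ :=
  ∑ f, |p.1 f - p'.1 f| + ∑ e, |p.2 e - p'.2 e|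

/-- A fluid model solution on `[0,T]` (algorithm-independent equations (F1)-(F8)). -/
structure FMS {E F : Type*} [Fintype E] [Fintype F] [DecidableEq E]
    (N : Network E F) (T : ℝ) where
  q : ℝ → E → ℝ
  z : ℝ → E → ℝ
  n : ℝ → F → ℝ
  s : ℝ → (E → ℝ) → ℝ
  xbar : ℝ → F → ℝ
  fa : ℝ → F → ℝ
  d : ℝ → F → ℝ
  a : ℝ → F → ℝ
  lip_q : ∀ e, ∃ K : NNReal, LipschitzOnWith K (fun t => q t e) (Set.Icc 0 T)
  lip_z : ∀ e, ∃ K : NNReal, LipschitzOnWith K (fun t => z t e) (Set.Icc 0 T)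
  lip_n : ∀ f, ∃ K : NNReal, LipschitzOnWith K (fun t => n t f) (Set.Icc 0 T)
  lip_s : ∀ σ, ∃ K : NNReal, LipschitzOnWith K (fun t => s t σ) (Set.Icc 0 T)
  lip_xbar : ∀ f, ∃ K : NNReal, LipschitzOnWith K (fun t => xbar t f) (Set.Icc 0 T)
  lip_fa : ∀ f, ∃ K : NNReal, LipschitzOnWith K (fun t => fa t f) (Set.Icc 0 T)
  lip_d : ∀ f, ∃ K : NNReal, LipschitzOnWith K (fun t => d t f) (Set.Icc 0 T)
  lip_a : ∀ f, ∃ K : NNReal, LipschitzOnWith K (fun t => a t f) (Set.Icc 0 T)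
  nonneg_q : ∀ t ∈ Set.Icc 0 T, ∀ e, 0 ≤ q t e
  nonneg_z : ∀ t ∈ Set.Icc 0 T, ∀ e, 0 ≤ z t e
  nonneg_n : ∀ t ∈ Set.Icc 0 T, ∀ f, 0 ≤ n t f
  nonneg_s : ∀ t ∈ Set.Icc 0 T, ∀ σ, 0 ≤ s t σ
  supp_s : ∀ t ∈ Set.Icc 0 T, ∀ σ ∉ N.S, s t σ = 0
  nonneg_xbar : ∀ t ∈ Set.Icc 0 T, ∀ f, 0 ≤ xbar t f
  nonneg_fa : ∀ t ∈ Set.Icc 0 T, ∀ f, 0 ≤ fa t f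
  nonneg_d : ∀ t ∈ Set.Icc 0 T, ∀ f, 0 ≤ d t f
  nonneg_a : ∀ t ∈ Set.Icc 0 T, ∀ f, 0 ≤ a t f
  eq_n : ∀ t ∈ Set.Icc 0 T, ∀ f, n t f = n 0 f + fa t f - d t f
  eq_fa : ∀ t ∈ Set.Icc 0 T, ∀ f, fa t f = N.ν f * t
  eq_d : ∀ t ∈ Set.Icc 0 T, ∀ f, d t f = N.μ f * xbar t f
  eq_q : ∀ t ∈ Set.Icc 0 T, ∀ e, q t e = q 0 e
      - ((1 - N.R.transpose) *ᵥ N.PiV (s t)) e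
      + ((1 - N.R.transpose) *ᵥ z t) e
      + (N.Gam *ᵥ a t) e
  eq_a : ∀ t ∈ Set.Icc 0 T, ∀ f, a t f = xbar t f
  eq_s : ∀ t ∈ Set.Icc 0 T, ∑ σ ∈ N.S, s t σ = t
  mono_z : ∀ t₁ ∈ Set.Icc 0 T, ∀ t₂ ∈ Set.Icc 0 T, t₁ ≤ t₂ → ∀ e, z t₁ e ≤ z t₂ e
  mono_s : ∀ t₁ ∈ Set.Icc 0 T, ∀ t₂ ∈ Set.Icc 0 T, t₁ ≤ t₂ → ∀ σ, s t₁ σ ≤ s t₂ σ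
  mono_xbar : ∀ t₁ ∈ Set.Icc 0 T, ∀ t₂ ∈ Set.Icc 0 T, t₁ ≤ t₂ → ∀ f, xbar t₁ f ≤ xbar t₂ f

namespace FMS

variable {E F : Type*} [Fintype E] [Fintype F] [DecidableEq E] {N : Network E F} {T : ℝ}

/-- a regular point: all components are differentiable at `t ∈ (0,T)`. -/
def Regular (Φ : FMS N T) (t : ℝ) : Prop :=
  t ∈ Set.Ioo 0 T ∧
  (∀ e, DifferentiableAt ℝ (fun u => Φ.q u e) t) ∧
  (∀ e, DifferentiableAt ℝ (fun u => Φ.z u e) t) ∧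
  (∀ f, DifferentiableAt ℝ (fun u => Φ.n u f) t) ∧
  (∀ σ, DifferentiableAt ℝ (fun u => Φ.s u σ) t) ∧
  (∀ f, DifferentiableAt ℝ (fun u => Φ.xbar u f) t) ∧
  (∀ f, DifferentiableAt ℝ (fun u => Φ.fa u f) t) ∧
  (∀ f, DifferentiableAt ℝ (fun u => Φ.d u f) t) ∧
  (∀ f, DifferentiableAt ℝ (fun u => Φ.a u f) t)

/-- the instantaneous rate `x_f(t) = (d/dt) x̄_f(t)`. -/
noncomputable def rate (Φ : FMS N T) (t : ℝ) (f : F) : ℝ := deriv (fun u => Φ.xbar u f) t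

/-- the α-fair objective `x^{1-α} n^α/(1-α) - q^α x`. -/
noncomputable def obj (α nf qf x : ℝ) : ℝ := x ^ (1 - α) * nf ^ α / (1 - α) - qf ^ α * x

/-- the MWUM-α conditions (F9)-(F12). -/
def IsMWUM (Φ : FMS N T) (α : ℝ) : Prop :=
  (∀ t ∈ Set.Icc (0 : ℝ) T, ∀ e, Φ.z t e = 0) ∧
  ∀ t, Φ.Regular t →
    ((∀ f, (0 < Φ.n t f →
        Φ.rate t f ∈ Set.Icc (0 : ℝ) N.C ∧
        ∀ y ∈ Set.Icc (0 : ℝ) N.C,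
          obj α (Φ.n t f) (Φ.q t (N.iota f)) y ≤
            obj α (Φ.n t f) (Φ.q t (N.iota f)) (Φ.rate t f)) ∧
      (Φ.n t f = 0 → Φ.rate t f = N.rho f)) ∧
    (∀ π ∈ N.S, N.weight α (Φ.q t) π < N.maxWeight α (Φ.q t) →
        deriv (fun u => Φ.s u π) t = 0) ∧
    (∀ f, Φ.n t f = 0 → Φ.q t (N.iota f) = 0))

end FMS

namespace NetworkAux

open Finset

variable {E F : Type*} [Fintype E] [Fintype F] [DecidableEq E] (N : Network E F)

/-- the singleton schedule at `e`. -/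
def singleSched (e : E) : E → ℝ := fun e' => if e' = e then 1 else 0

lemma singleSched_mem (e : E) : singleSched e ∈ N.S := N.hSsingle e

lemma singleSched_nonneg (e e' : E) : (0 : ℝ) ≤ singleSched e e' := by
  unfold singleSched; split <;> norm_num

/-- `Ξ` is a two-sided inverse of `1 - Rᵀ`, with nonnegative entries. -/
lemma Xi_facts :
    N.Xi * (1 - N.R.transpose) = 1 ∧ (1 - N.R.transpose) * N.Xi = 1 ∧
      ∀ e e', 0 ≤ N.Xi e e' := by
  obtain ⟨m, hm⟩ := N.hRnil
  have hXm : N.R.transpose ^ m = 0 := by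
    rw [← Matrix.transpose_pow, hm, Matrix.transpose_zero]
  have hr : (1 - N.R.transpose) * (∑ i ∈ Finset.range m, N.R.transpose ^ i) = 1 := by
    rw [mul_neg_geom_sum, hXm, sub_zero]
  have hXi : N.Xi = ∑ i ∈ Finset.range m, N.R.transpose ^ i :=
    Matrix.inv_eq_right_inv hr
  have hXnn : ∀ i : ℕ, ∀ e e', 0 ≤ (N.R.transpose ^ i) e e' := by
    intro i
    induction i with
    | zero =>
      intro e e'
      simp only [pow_zero, Matrix.one_apply]
      split <;> norm_num
    | succ i ih =>
      intro e e'
      rw [pow_succ, Matrix.mul_apply]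
      refine Finset.sum_nonneg fun j _ => mul_nonneg (ih e j) ?_
      rw [Matrix.transpose_apply]
      rcases N.hR01 e' j with h | h <;> simp [h]
  refine ⟨?_, ?_, ?_⟩
  · rw [hXi, ← mul_eq_one_comm]; exact hr
  · rw [hXi]; exact hr
  · intro e e'
    rw [hXi, Matrix.sum_apply]
    exact Finset.sum_nonneg fun i _ => hXnn i e e'

lemma rho_nonneg (f : F) : 0 ≤ N.rho f :=
  div_nonneg (N.hν f).le (N.hμ0 f).le

lemma lamv_nonneg (e : E) : 0 ≤ N.lamv e := by
  have hXi := (Xi_facts N).2.2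
  unfold Network.lamv
  rw [Matrix.mulVec]
  refine Finset.sum_nonneg fun e' _ => mul_nonneg (hXi e e') ?_
  rw [Matrix.mulVec]
  refine Finset.sum_nonneg fun f _ => mul_nonneg ?_ (rho_nonneg N f)
  unfold Network.Gam
  simp only [Matrix.of_apply]
  split <;> norm_num

lemma PiV_nonneg {s : (E → ℝ) → ℝ} (hs : ∀ σ, 0 ≤ s σ) (e : E) : 0 ≤ N.PiV s e := by
  refine Finset.sum_nonneg fun σ hσ => mul_nonneg (hs σ) ?_
  rcases N.hS01 σ hσ e with h | h <;> simp [h]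

/-- Criticality yields a dual feasible vector of value at least one
(a separation / strong-duality argument). -/
lemma exists_dual_of_crit (hcrit : N.Leff = 1) :
    ∃ ζ0 : E → ℝ, N.dualFeasible ζ0 ∧ (1 : ℝ) ≤ ∑ e, N.lamv e * ζ0 e := by
  classical
  set K : Set (E → ℝ) :=
    {x | ∃ s : (E → ℝ) → ℝ, (∀ σ, 0 ≤ s σ) ∧ (∑ σ ∈ N.S, s σ) < 1 ∧
      ∀ e, x e < N.PiV s e} with hKdef
  -- K is convex
  have hKconv : Convex ℝ K := by
    rintro x ⟨s1, hs1n, hs1b, hs1x⟩ y ⟨s2, hs2n, hs2b, hs2x⟩ a b ha hb hab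
    refine ⟨fun σ => a * s1 σ + b * s2 σ, fun σ => add_nonneg (mul_nonneg ha (hs1n σ)) (mul_nonneg hb (hs2n σ)), ?_, ?_⟩
    · have hsum : ∑ σ ∈ N.S, (a * s1 σ + b * s2 σ)
          = a * ∑ σ ∈ N.S, s1 σ + b * ∑ σ ∈ N.S, s2 σ := by
        rw [Finset.sum_add_distrib, Finset.mul_sum, Finset.mul_sum]
      rw [hsum]
      set M := max (∑ σ ∈ N.S, s1 σ) (∑ σ ∈ N.S, s2 σ) with hM
      have hM1 : M < 1 := max_lt hs1b hs2b
      have h1 : a * ∑ σ ∈ N.S, s1 σ ≤ a * M :=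
        mul_le_mul_of_nonneg_left (le_max_left _ _) ha
      have h2 : b * ∑ σ ∈ N.S, s2 σ ≤ b * M :=
        mul_le_mul_of_nonneg_left (le_max_right _ _) hb
      nlinarith
    · intro e
      have hP : N.PiV (fun σ => a * s1 σ + b * s2 σ) e
          = a * N.PiV s1 e + b * N.PiV s2 e := by
        unfold Network.PiV
        rw [Finset.mul_sum, Finset.mul_sum, ← Finset.sum_add_distrib]
        refine Finset.sum_congr rfl fun σ _ => by ring
      rw [hP]
      simp only [Pi.add_apply, Pi.smul_apply, smul_eq_mul]
      rcases eq_or_lt_of_le ha with ha0 | ha0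
      · have hb1 : b = 1 := by linarith
        rw [← ha0, hb1]; simpa using hs2x e
      · have h1 : a * x e < a * N.PiV s1 e := by
          exact mul_lt_mul_of_pos_left (hs1x e) ha0
        have h2 : b * y e ≤ b * N.PiV s2 e :=
          mul_le_mul_of_nonneg_left (hs2x e).le hb
        linarith
  -- K is open
  have hKopen : IsOpen K := by
    rw [Metric.isOpen_iff]
    rintro x ⟨s, hsn, hsb, hsx⟩
    rcases isEmpty_or_nonempty E with hE | hE
    · exact ⟨1, one_pos, fun y _ => ⟨s, hsn, hsb, fun e => (hE.false e).elim⟩⟩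
    · have hne : (Finset.univ : Finset E).Nonempty := Finset.univ_nonempty
      set ε := Finset.univ.inf' hne (fun e => N.PiV s e - x e) with hε
      have hεpos : 0 < ε := by
        rw [hε, Finset.lt_inf'_iff]
        exact fun e _ => sub_pos.mpr (hsx e)
      refine ⟨ε, hεpos, fun y hy => ⟨s, hsn, hsb, fun e => ?_⟩⟩
      have h1 : dist (y e) (x e) ≤ dist y x := dist_le_pi_dist y x e
      have h2 : ε ≤ N.PiV s e - x e := Finset.inf'_le _ (Finset.mem_univ e)
      have h3 : dist y x < ε := Metric.mem_ball.mp hy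
      have h4 : y e - x e ≤ |y e - x e| := le_abs_self _
      rw [Real.dist_eq] at h1
      linarith
  -- scaled schedules lie in K
  have hmemK : ∀ σ ∈ N.S, ∀ c : ℝ, 0 ≤ c → c < 1 → c • σ ∈ K := by
    intro σ hσ c hc0 hc1
    set ε := (1 - c) / (Fintype.card E + 1) with hεdef
    have hεpos : 0 < ε := by
      apply div_pos (by linarith)
      positivity
    refine ⟨fun σ' => (if σ = σ' then c else 0)
      + ε * ∑ e, (if singleSched e = σ' then (1 : ℝ) else 0), ?_, ?_, ?_⟩
    · intro σ'
      refine add_nonneg ?_ (mul_nonneg hεpos.le (Finset.sum_nonneg fun e _ => ?_))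
      · split <;> simp [hc0]
      · split <;> norm_num
    · have h1 : ∑ σ' ∈ N.S, (if σ = σ' then c else 0) = c := by
        rw [Finset.sum_ite_eq]; simp [hσ]
      have h2 : ∑ σ' ∈ N.S, (∑ e, (if singleSched e = σ' then (1:ℝ) else 0))
          = (Fintype.card E : ℝ) := by
        rw [Finset.sum_comm]
        have : ∀ e : E, ∑ σ' ∈ N.S, (if singleSched e = σ' then (1:ℝ) else 0) = 1 := by
          intro e
          rw [Finset.sum_ite_eq]
          simp [singleSched_mem N e]
        simp [this, Finset.card_univ]
      rw [Finset.sum_add_distrib, h1, ← Finset.mul_sum, h2]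
      have hcard : (ε : ℝ) * (Fintype.card E : ℝ) < 1 - c := by
        have h3 : ε * ((Fintype.card E : ℝ) + 1) = 1 - c := by
          rw [hεdef]
          field_simp
        nlinarith
      linarith
    · intro e
      have h1 : ∑ σ' ∈ N.S, (if σ = σ' then c else 0) * σ' e = c * σ e := by
        have : ∀ σ' ∈ N.S, (if σ = σ' then c else 0) * σ' e
            = (if σ = σ' then c * σ' e else 0) := by
          intro σ' _; split <;> simp
        rw [Finset.sum_congr rfl this, Finset.sum_ite_eq]
        simp [hσ]
      have h2 : ∑ σ' ∈ N.S, (ε * ∑ e', (if singleSched e' = σ' then (1:ℝ) else 0)) * σ' e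
          = ε := by
        have hterm : ∀ σ' ∈ N.S, (ε * ∑ e', (if singleSched e' = σ' then (1:ℝ) else 0)) * σ' e
            = ε * ∑ e', (if singleSched e' = σ' then σ' e else 0) := by
          intro σ' _
          rw [mul_assoc, Finset.sum_mul]
          congr 1
          refine Finset.sum_congr rfl fun e' _ => ?_
          split <;> simp
        rw [Finset.sum_congr rfl hterm, ← Finset.mul_sum, Finset.sum_comm]
        have : ∀ e' : E, ∑ σ' ∈ N.S, (if singleSched e' = σ' then σ' e else 0)
            = singleSched e' e := by
          intro e'
          rw [Finset.sum_ite_eq]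
          simp [singleSched_mem N e']
        rw [Finset.sum_congr rfl (fun e' _ => this e')]
        have hs : ∑ e' : E, singleSched e' e = 1 := by
          unfold singleSched
          simp
        rw [hs, mul_one]
      unfold Network.PiV
      have hsplit : ∑ σ' ∈ N.S, ((if σ = σ' then c else 0)
            + ε * ∑ e', (if singleSched e' = σ' then (1:ℝ) else 0)) * σ' e
          = (∑ σ' ∈ N.S, (if σ = σ' then c else 0) * σ' e)
            + ∑ σ' ∈ N.S, (ε * ∑ e', (if singleSched e' = σ' then (1:ℝ) else 0)) * σ' e := by
        rw [← Finset.sum_add_distrib]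
        exact Finset.sum_congr rfl fun σ' _ => by ring
      rw [hsplit, h1, h2]
      simp only [Pi.smul_apply, smul_eq_mul]
      linarith
  -- λ is not in K
  have hlam_not : N.lamv ∉ K := by
    rintro ⟨s, hsn, hsb, hsx⟩
    have hbdd : BddBelow {v | ∃ s : (E → ℝ) → ℝ, (∀ σ, 0 ≤ s σ) ∧
        (∀ e, N.lamv e ≤ N.PiV s e) ∧ v = ∑ σ ∈ N.S, s σ} := by
      refine ⟨0, ?_⟩
      rintro v ⟨s', hs'n, _, rfl⟩
      exact Finset.sum_nonneg fun σ _ => hs'n σ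
    have hle : N.PRIMAL N.lamv ≤ ∑ σ ∈ N.S, s σ :=
      csInf_le hbdd ⟨s, hsn, fun e => (hsx e).le, rfl⟩
    have : N.Leff ≤ ∑ σ ∈ N.S, s σ := hle
    rw [hcrit] at this
    linarith
  have h0K : (0 : E → ℝ) ∈ K := by
    have := hmemK 0 N.hS0 0 le_rfl one_pos
    simpa using this
  obtain ⟨f, hfl, hfK⟩ := separate_convex_open_set h0K hKconv hKopen hlam_not
  -- f σ ≤ 1 on schedules
  have hfS : ∀ σ ∈ N.S, f σ ≤ 1 := by
    intro σ hσ
    by_contra hcon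
    push_neg at hcon
    have hfσpos : 0 < f σ := lt_trans one_pos hcon
    have hc1 : 1 / f σ < 1 := by
      rw [div_lt_one hfσpos]; exact hcon
    have := hfK _ (hmemK σ hσ (1 / f σ) (by positivity) hc1)
    rw [_root_.map_smul, smul_eq_mul, one_div, inv_mul_cancel₀ (ne_of_gt hfσpos)] at this
    exact lt_irrefl 1 this
  -- f is nonnegative on coordinates
  have hfpos : ∀ e : E, 0 ≤ f (singleSched e) := by
    intro e
    by_contra hcon
    push_neg at hcon
    set c := 2 / (-(f (singleSched e))) with hc
    have hcpos : 0 < c := div_pos two_pos (by linarith)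
    have hmem : (-c) • singleSched e ∈ K := by
      obtain ⟨s, hsn, hsb, hsx⟩ := h0K
      refine ⟨s, hsn, hsb, fun e' => ?_⟩
      have h1 : ((-c) • singleSched e) e' ≤ 0 := by
        simp only [Pi.smul_apply, smul_eq_mul]
        have := singleSched_nonneg e e'
        nlinarith
      have h2 := hsx e'
      simp only [Pi.zero_apply] at h2
      linarith
    have := hfK _ hmem
    rw [_root_.map_smul, smul_eq_mul] at this
    have hne : f (singleSched e) ≠ 0 := ne_of_lt hcon
    have hval : -c * f (singleSched e) = 2 := by
      have h5 : -c = 2 / f (singleSched e) := by rw [hc, div_neg, neg_neg]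
      rw [h5, div_mul_cancel₀ _ hne]
    rw [hval] at this
    linarith
  -- representation of f
  have hrep : ∀ x : E → ℝ, f x = ∑ e, x e * f (singleSched e) := by
    intro x
    conv_lhs => rw [pi_eq_sum_univ x]
    rw [map_sum]
    refine Finset.sum_congr rfl fun e _ => ?_
    rw [_root_.map_smul, smul_eq_mul]
    have hss : (fun j => if e = j then (1:ℝ) else 0) = singleSched e := by
      funext j; unfold singleSched; simp [eq_comm]
    rw [hss]
  refine ⟨fun e => f (singleSched e), ⟨hfpos, fun σ hσ => ?_⟩, ?_⟩
  · calc ∑ e, f (singleSched e) * σ e = ∑ e, σ e * f (singleSched e) := by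
          simp [mul_comm]
      _ = f σ := (hrep σ).symm
      _ ≤ 1 := hfS σ hσ
  · calc (1 : ℝ) = f N.lamv := hfl.symm
      _ = ∑ e, N.lamv e * f (singleSched e) := hrep N.lamv
      _ ≤ ∑ e, N.lamv e * f (singleSched e) := le_rfl

/-- in a critically loaded system every critical virtual resource has value at least one. -/
lemma one_le_CR_value (hcrit : N.Leff = 1) {ζ : E → ℝ} (hζ : ζ ∈ N.CR) :
    (1 : ℝ) ≤ ∑ e, N.lamv e * ζ e := by
  classical
  obtain ⟨ζ0, hζ0f, hζ0v⟩ := exists_dual_of_crit N hcrit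
  rw [hζ.2]
  refine le_trans hζ0v (le_csSup ?_ ⟨ζ0, hζ0f, rfl⟩)
  refine ⟨∑ e, N.lamv e, ?_⟩
  rintro v ⟨ζ', hζ'f, rfl⟩
  refine Finset.sum_le_sum fun e _ => ?_
  have h1 : ζ' e ≤ 1 := by
    have h2 := hζ'f.2 _ (singleSched_mem N e)
    have h3 : ∑ e', ζ' e' * singleSched e e' = ζ' e := by
      unfold singleSched
      simp
    rw [h3] at h2
    exact h2
  calc N.lamv e * ζ' e ≤ N.lamv e * 1 :=
        mul_le_mul_of_nonneg_left h1 (lamv_nonneg N e)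
    _ = N.lamv e := mul_one _

end NetworkAux



/-- Workload conservation: in a critically loaded system, along
any fluid model solution (any policy), the workload of every critical virtual
resource is non-decreasing from its initial value. -/
theorem workload_conservation
    {E F : Type*} [Fintype E] [Fintype F] [DecidableEq E]
    (N : Network E F) (hcrit : N.Leff = 1)
    (T : ℝ) (hT : 0 < T) (Φ : FMS N T)
    (t : ℝ) (ht : t ∈ Set.Icc 0 T) (ζ : E → ℝ) (hζ : ζ ∈ N.CR) :
    N.workload ζ (Φ.n 0) (Φ.q 0) ≤ N.workload ζ (Φ.n t) (Φ.q t) := by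
  classical
  have ht0 := ht.1
  have htT := ht.2
  obtain ⟨hXiL, hXiR, hXinn⟩ := NetworkAux.Xi_facts N
  have hμne : ∀ f, N.μ f ≠ 0 := fun f => ne_of_gt (N.hμ0 f)
  -- flow-level identity
  have harg : (Φ.a t + fun f => Φ.n t f / N.μ f)
      = (fun f => Φ.n 0 f / N.μ f) + t • N.rho := by
    funext f
    have h1 := Φ.eq_n t ht f
    have h2 := Φ.eq_fa t ht f
    have h3 := Φ.eq_d t ht f
    have h4 := Φ.eq_a t ht f
    simp only [Pi.add_apply, Pi.smul_apply, smul_eq_mul, Network.rho]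
    rw [h4, h1, h2, h3]
    field_simp
    linear_combination (-(Φ.xbar t f)) * mul_inv_cancel₀ (hμne f)
  -- queue-level identity
  have hv : (Φ.q t + N.Gam *ᵥ fun f => Φ.n t f / N.μ f)
      = (Φ.q 0 + N.Gam *ᵥ fun f => Φ.n 0 f / N.μ f)
        + (1 - N.R.transpose) *ᵥ (Φ.z t - N.PiV (Φ.s t))
        + t • (N.Gam *ᵥ N.rho) := by
    funext e
    have hq := Φ.eq_q t ht e
    have hsub : ((1 - N.R.transpose) *ᵥ (Φ.z t - N.PiV (Φ.s t))) e
        = ((1 - N.R.transpose) *ᵥ Φ.z t) e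
          - ((1 - N.R.transpose) *ᵥ N.PiV (Φ.s t)) e := by
      rw [Matrix.mulVec_sub]
      rfl
    have hGa : (N.Gam *ᵥ Φ.a t) e + (N.Gam *ᵥ fun f => Φ.n t f / N.μ f) e
        = (N.Gam *ᵥ fun f => Φ.n 0 f / N.μ f) e + t * (N.Gam *ᵥ N.rho) e := by
      have hm : N.Gam *ᵥ (Φ.a t + fun f => Φ.n t f / N.μ f)
          = N.Gam *ᵥ ((fun f => Φ.n 0 f / N.μ f) + t • N.rho) := by rw [harg]
      rw [Matrix.mulVec_add, Matrix.mulVec_add, Matrix.mulVec_smul] at hm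
      have := congrFun hm e
      simpa using this
    simp only [Pi.add_apply, Pi.smul_apply, smul_eq_mul]
    rw [hq, hsub]
    linarith
  -- workload identity
  have hvec : (N.Xi *ᵥ (Φ.q t + N.Gam *ᵥ fun f => Φ.n t f / N.μ f))
      = (N.Xi *ᵥ (Φ.q 0 + N.Gam *ᵥ fun f => Φ.n 0 f / N.μ f))
        + (Φ.z t - N.PiV (Φ.s t)) + t • N.lamv := by
    rw [hv, Matrix.mulVec_add, Matrix.mulVec_add, Matrix.mulVec_smul,
      Matrix.mulVec_mulVec, hXiL, Matrix.one_mulVec]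
    rfl
  have hw : N.workload ζ (Φ.n t) (Φ.q t)
      = N.workload ζ (Φ.n 0) (Φ.q 0)
        + (∑ e, ζ e * Φ.z t e - ∑ e, ζ e * N.PiV (Φ.s t) e)
        + t * (∑ e, N.lamv e * ζ e) := by
    unfold Network.workload
    rw [hvec]
    have hterm : ∀ e, ζ e * (((N.Xi *ᵥ (Φ.q 0 + N.Gam *ᵥ fun f => Φ.n 0 f / N.μ f))
          + (Φ.z t - N.PiV (Φ.s t)) + t • N.lamv) e)
        = ζ e * (N.Xi *ᵥ (Φ.q 0 + N.Gam *ᵥ fun f => Φ.n 0 f / N.μ f)) e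
          + (ζ e * Φ.z t e - ζ e * N.PiV (Φ.s t) e) + t * (N.lamv e * ζ e) := by
      intro e
      simp only [Pi.add_apply, Pi.sub_apply, Pi.smul_apply, smul_eq_mul]
      ring
    rw [Finset.sum_congr rfl fun e _ => hterm e, Finset.sum_add_distrib,
      Finset.sum_add_distrib, Finset.sum_sub_distrib, ← Finset.mul_sum]
  -- the three estimates
  have hzpos : 0 ≤ ∑ e, ζ e * Φ.z t e :=
    Finset.sum_nonneg fun e _ => mul_nonneg (hζ.1.1 e) (Φ.nonneg_z t ⟨ht0, htT⟩ e)
  have hP : ∑ e, ζ e * N.PiV (Φ.s t) e ≤ t := by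
    have hswap : ∑ e, ζ e * N.PiV (Φ.s t) e
        = ∑ σ ∈ N.S, Φ.s t σ * ∑ e, ζ e * σ e := by
      have h1 : ∀ e, ζ e * N.PiV (Φ.s t) e = ∑ σ ∈ N.S, Φ.s t σ * (ζ e * σ e) := by
        intro e
        unfold Network.PiV
        rw [Finset.mul_sum]
        exact Finset.sum_congr rfl fun σ _ => by ring
      rw [Finset.sum_congr rfl fun e _ => h1 e, Finset.sum_comm]
      exact Finset.sum_congr rfl fun σ _ => (Finset.mul_sum _ _ _).symm
    rw [hswap]
    calc ∑ σ ∈ N.S, Φ.s t σ * ∑ e, ζ e * σ e ≤ ∑ σ ∈ N.S, Φ.s t σ := by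
          refine Finset.sum_le_sum fun σ hσ => ?_
          calc Φ.s t σ * ∑ e, ζ e * σ e ≤ Φ.s t σ * 1 :=
                mul_le_mul_of_nonneg_left (hζ.1.2 σ hσ) (Φ.nonneg_s t ⟨ht0, htT⟩ σ)
            _ = Φ.s t σ := mul_one _
      _ = t := Φ.eq_s t ⟨ht0, htT⟩
  have hdual : 1 ≤ ∑ e, N.lamv e * ζ e := NetworkAux.one_le_CR_value N hcrit hζ
  have htd : t * 1 ≤ t * ∑ e, N.lamv e * ζ e :=
    mul_le_mul_of_nonneg_left hdual ht0
  rw [hw]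
  linarith
end

section
/- Consider a critically loaded system (Leff(ρ) = 1) and any fluid model solution on [0,T] (i.e., a trajectory satisfying only the algorithm-independent fluid equations) with flow-count and queue-length components (n(·), q(·)). Then for every t ∈ [0,T], the instantaneous cost is bounded below by the effective cost of the initial state: c*(n(0), q(0)) ≤ c(n(t), q(t)). -/
open Matrix Filter

section Aux
open Pointwise
namespace Network

variable {E F : Type*} [Fintype E] [Fintype F] [DecidableEq E] (N : Network E F)

/-- the standard basis vector `δ_e`. -/
noncomputable def deltaV (e : E) : E → ℝ := fun e' => if e' = e then (1 : ℝ) else 0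

lemma sum_deltaV_repr (x : E → ℝ) : x = ∑ e, x e • deltaV e := by
  funext e'
  simp [deltaV, Finset.sum_apply, mul_ite]

lemma clm_repr (f : (E → ℝ) →L[ℝ] ℝ) (x : E → ℝ) :
    f x = ∑ e, x e * f (deltaV e) := by
  conv_lhs => rw [sum_deltaV_repr x]
  rw [map_sum]
  simp [smul_eq_mul]

lemma dual_feas_le_one {ζ : E → ℝ} (hζ : N.dualFeasible ζ) (e : E) : ζ e ≤ 1 := by
  have h := hζ.2 _ (N.hSsingle e)
  simpa [mul_ite] using h

lemma dual_bddAbove :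
    BddAbove { v | ∃ ζ : E → ℝ, N.dualFeasible ζ ∧ v = ∑ e, N.lamv e * ζ e } := by
  refine ⟨∑ e, |N.lamv e|, ?_⟩
  rintro v ⟨ζ, hζ, rfl⟩
  refine Finset.sum_le_sum fun e _ => ?_
  have h0 := hζ.1 e
  have h1 := N.dual_feas_le_one hζ e
  nlinarith [le_abs_self (N.lamv e), neg_abs_le (N.lamv e), abs_nonneg (N.lamv e)]

lemma primal_bddBelow (l : E → ℝ) :
    BddBelow { v | ∃ s : (E → ℝ) → ℝ, (∀ σ, 0 ≤ s σ) ∧ (∀ e, l e ≤ N.PiV s e) ∧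
      v = ∑ σ ∈ N.S, s σ } := by
  refine ⟨0, ?_⟩
  rintro v ⟨s, hs, _, rfl⟩
  exact Finset.sum_nonneg fun σ _ => hs σ

/-- Strong duality direction needed: if `PRIMAL(λ) = 1` then `DUAL(λ) ≥ 1`. -/
lemma one_le_DUAL (hcrit : N.PRIMAL N.lamv = 1) : (1 : ℝ) ≤ N.DUAL N.lamv := by
  classical
  set Dneg : Set (E → ℝ) := { y | ∀ e, y e ≤ 0 } with hDneg_def
  set D : Set (E → ℝ) := convexHull ℝ (N.S : Set (E → ℝ)) + Dneg with hD_def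
  have hDnegConv : Convex ℝ Dneg := by
    intro x hx y hy a b ha hb hab e
    have h1 : a * x e ≤ 0 := mul_nonpos_of_nonneg_of_nonpos ha (hx e)
    have h2 : b * y e ≤ 0 := mul_nonpos_of_nonneg_of_nonpos hb (hy e)
    simpa [smul_eq_mul] using add_nonpos h1 h2
  have hDnegClosed : IsClosed Dneg := by
    have : Dneg = ⋂ e, (fun y : E → ℝ => y e) ⁻¹' Set.Iic 0 := by
      ext y; simp [hDneg_def, Set.mem_iInter]
    rw [this]
    exact isClosed_iInter fun e => IsClosed.preimage (continuous_apply e) isClosed_Iic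
  have hDconv : Convex ℝ D := (convex_convexHull ℝ _).add hDnegConv
  have hDclosed : IsClosed D := by
    have hcpt : IsCompact (convexHull ℝ (↑N.S : Set (E → ℝ))) :=
      (N.S.finite_toSet).isCompact_convexHull ℝ
    exact hDnegClosed.add_left_of_isCompact hcpt
  have h0Dneg : (0 : E → ℝ) ∈ Dneg := fun e => le_refl 0
  have h0hull : (0 : E → ℝ) ∈ convexHull ℝ (↑N.S : Set (E → ℝ)) :=
    subset_convexHull ℝ _ N.hS0
  have h0D : (0 : E → ℝ) ∈ D := by
    have := Set.add_mem_add h0hull h0Dneg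
    simpa using this
  -- key claim: for each θ ∈ (0,1) there is a dual-feasible value exceeding θ
  have key : ∀ θ : ℝ, 0 < θ → θ < 1 →
      ∃ v ∈ { v | ∃ ζ : E → ℝ, N.dualFeasible ζ ∧ v = ∑ e, N.lamv e * ζ e }, θ < v := by
    intro θ hθ0 hθ1
    have hθne : θ ≠ 0 := ne_of_gt hθ0
    -- λ is not in θ • D
    have hnot : N.lamv ∉ θ • D := by
      intro hmem
      obtain ⟨x, hxD, hx⟩ := hmem
      obtain ⟨c, hc, y, hy, hcy⟩ := Set.mem_add.mp hxD
      rw [Finset.convexHull_eq] at hc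
      obtain ⟨w, hw0, hw1, hcm⟩ := hc
      rw [Finset.centerMass_eq_of_sum_1 _ _ hw1] at hcm
      set sfun : (E → ℝ) → ℝ := fun σ => if σ ∈ N.S then θ * w σ else 0 with hsfun
      have hce : ∀ e, c e = ∑ σ ∈ N.S, w σ * σ e := by
        intro e
        rw [← hcm]
        simp [Finset.sum_apply, smul_eq_mul]
      have hmemP : (θ : ℝ) ∈ { v | ∃ s : (E → ℝ) → ℝ, (∀ σ, 0 ≤ s σ) ∧
          (∀ e, N.lamv e ≤ N.PiV s e) ∧ v = ∑ σ ∈ N.S, s σ } := by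
        refine ⟨sfun, ?_, ?_, ?_⟩
        · intro σ
          by_cases h : σ ∈ N.S <;> simp [hsfun, h]
          exact mul_nonneg hθ0.le (hw0 σ h)
        · intro e
          have hlam : N.lamv e = θ * (c e + y e) := by
            rw [← hx, ← hcy]; simp [smul_eq_mul]
          have hPiV : N.PiV sfun e = θ * c e := by
            rw [hce]
            simp only [Network.PiV, hsfun]
            rw [Finset.mul_sum]
            refine Finset.sum_congr rfl fun σ hσ => ?_
            simp [hσ]; ring
          rw [hlam, hPiV]
          have := hy e
          nlinarith
        · simp only [hsfun]
          rw [Finset.sum_congr rfl (fun σ hσ => if_pos hσ), ← Finset.mul_sum, hw1, mul_one]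
      have hle : N.PRIMAL N.lamv ≤ θ :=
        csInf_le (N.primal_bddBelow N.lamv) hmemP
      rw [hcrit] at hle
      linarith
    have hclosed : IsClosed (θ • D) := by
      rw [← Set.image_smul]
      exact isClosedMap_smul₀ θ _ hDclosed
    obtain ⟨f, u, hfD, hflam⟩ :=
      geometric_hahn_banach_closed_point (hDconv.smul θ) hclosed hnot
    have h0θD : (0 : E → ℝ) ∈ θ • D := by
      refine ⟨0, h0D, smul_zero θ⟩
    have hu0 : 0 < u := by
      have := hfD 0 h0θD
      simpa using this
    -- coordinates of f are nonnegative
    have hfnn : ∀ e, 0 ≤ f (deltaV e) := by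
      intro e
      by_contra hneg
      push_neg at hneg
      set r : ℝ := (u + 1) / (-f (deltaV e)) with hr
      have hfe : 0 < -f (deltaV e) := by linarith
      have hrpos : 0 < r := div_pos (by linarith) hfe
      have hyD : ((θ⁻¹ * (-r)) • deltaV e) ∈ Dneg := by
        intro e'
        simp only [Pi.smul_apply, smul_eq_mul, deltaV]
        by_cases h : e' = e <;> simp [h]
        positivity
      have hmem : ((-r) • deltaV e) ∈ θ • D := by
        refine ⟨(θ⁻¹ * (-r)) • deltaV e, ?_, ?_⟩
        · have := Set.add_mem_add h0hull hyD
          simpa using this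
        · show θ • (θ⁻¹ * -r) • deltaV e = (-r) • deltaV e
          rw [smul_smul]
          congr 1
          field_simp
      have := hfD _ hmem
      rw [f.map_smul, smul_eq_mul] at this
      have heq : -r * f (deltaV e) = u + 1 := by
        have hne : f (deltaV e) ≠ 0 := ne_of_lt hneg
        rw [hr]
        field_simp
      rw [heq] at this
      linarith
    -- the candidate dual solution
    set ζ : E → ℝ := fun e => (θ / u) * f (deltaV e) with hζ
    have hθu : 0 < θ / u := div_pos hθ0 hu0
    have hfeas : N.dualFeasible ζ := by
      constructor
      · intro e
        exact mul_nonneg hθu.le (hfnn e)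
      · intro σ hσ
        have hσD : (θ • σ) ∈ θ • D := by
          refine Set.smul_mem_smul_set ?_
          have h1 : σ ∈ convexHull ℝ (↑N.S : Set (E → ℝ)) :=
            subset_convexHull ℝ _ (by exact_mod_cast hσ)
          have := Set.add_mem_add h1 h0Dneg
          simpa using this
        have hlt : θ * f σ < u := by
          have := hfD _ hσD
          rwa [f.map_smul, smul_eq_mul] at this
        have hrepr : ∑ e, ζ e * σ e = (θ / u) * f σ := by
          rw [clm_repr f σ, Finset.mul_sum]
          refine Finset.sum_congr rfl fun e _ => ?_
          simp only [hζ]; ring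
        rw [hrepr, div_mul_eq_mul_div, div_le_one hu0]
        nlinarith
    refine ⟨∑ e, N.lamv e * ζ e, ⟨ζ, hfeas, rfl⟩, ?_⟩
    have hrepr : ∑ e, N.lamv e * ζ e = (θ / u) * f N.lamv := by
      rw [clm_repr f N.lamv, Finset.mul_sum]
      refine Finset.sum_congr rfl fun e _ => ?_
      simp only [hζ]; ring
    rw [hrepr]
    calc θ = (θ / u) * u := by field_simp
    _ < (θ / u) * f N.lamv := by
        exact mul_lt_mul_of_pos_left hflam hθu
  -- conclude
  refine le_of_forall_lt fun c hc => ?_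
  set θ : ℝ := max c (1 / 2) with hθ
  have hθ0 : 0 < θ := lt_of_lt_of_le (by norm_num) (le_max_right _ _)
  have hθ1 : θ < 1 := max_lt hc (by norm_num)
  obtain ⟨v, hvmem, hθv⟩ := key θ hθ0 hθ1
  have : c ≤ θ := le_max_left _ _
  have hvle : v ≤ N.DUAL N.lamv := le_csSup (N.dual_bddAbove) hvmem
  calc c ≤ θ := this
  _ < v := hθv
  _ ≤ N.DUAL N.lamv := hvle

lemma Xi_mul_cancel : N.Xi * (1 - N.R.transpose) = 1 := by
  have hnil : IsNilpotent N.R.transpose := by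
    obtain ⟨k, hk⟩ := N.hRnil
    exact ⟨k, by rw [← Matrix.transpose_pow, hk, Matrix.transpose_zero]⟩
  have hu : IsUnit (1 - N.R.transpose) := hnil.isUnit_one_sub
  exact Matrix.nonsing_inv_mul _ ((Matrix.isUnit_iff_isUnit_det _).mp hu)

lemma workload_mono {T : ℝ} (Φ : FMS N T) {t : ℝ} (ht : t ∈ Set.Icc 0 T)
    (h0 : (0 : ℝ) ∈ Set.Icc 0 T) (ζ : E → ℝ) (hζ : N.dualFeasible ζ)
    (hval : (1 : ℝ) ≤ ∑ e, N.lamv e * ζ e) :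
    N.workload ζ (Φ.n 0) (Φ.q 0) ≤ N.workload ζ (Φ.n t) (Φ.q t) := by
  classical
  have ht0 : 0 ≤ t := ht.1
  set u : E → ℝ := fun e => N.PiV (Φ.s t) e - Φ.z t e with hu_def
  -- the vector identity
  have hvec : (Φ.q t + N.Gam *ᵥ fun f => Φ.n t f / N.μ f) =
      ((Φ.q 0 + N.Gam *ᵥ fun f => Φ.n 0 f / N.μ f) + t • (N.Gam *ᵥ N.rho))
        - (1 - N.R.transpose) *ᵥ u := by
    funext e
    have hq := Φ.eq_q t ht e
    have hn : ∀ f, Φ.n t f / N.μ f = Φ.n 0 f / N.μ f + t * N.rho f - Φ.xbar t f := by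
      intro f
      have h1 := Φ.eq_n t ht f
      have h2 := Φ.eq_fa t ht f
      have h3 := Φ.eq_d t ht f
      have hμ : N.μ f ≠ 0 := ne_of_gt (N.hμ0 f)
      rw [h1, h2, h3]
      field_simp [Network.rho]
      have hρ : N.rho f * N.μ f = N.ν f := by unfold Network.rho; exact div_mul_cancel₀ _ hμ
      linear_combination (-t) * hρ
    have hsplit : (1 - N.R.transpose) *ᵥ u =
        ((1 - N.R.transpose) *ᵥ N.PiV (Φ.s t)) - ((1 - N.R.transpose) *ᵥ Φ.z t) := by
      rw [hu_def]
      exact Matrix.mulVec_sub _ _ _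
    simp only [Pi.add_apply, Pi.sub_apply, Pi.smul_apply, smul_eq_mul]
    rw [hq, hsplit]
    simp only [Pi.sub_apply]
    have hGa : (N.Gam *ᵥ Φ.a t) e = ∑ f, N.Gam e f * Φ.xbar t f := by
      simp only [Matrix.mulVec, dotProduct]
      exact Finset.sum_congr rfl fun f _ => by rw [Φ.eq_a t ht f]
    have hGn : (N.Gam *ᵥ fun f => Φ.n t f / N.μ f) e =
        (N.Gam *ᵥ fun f => Φ.n 0 f / N.μ f) e + t * (N.Gam *ᵥ N.rho) e
          - ∑ f, N.Gam e f * Φ.xbar t f := by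
      simp only [Matrix.mulVec, dotProduct, Finset.mul_sum]
      rw [← Finset.sum_add_distrib, ← Finset.sum_sub_distrib]
      refine Finset.sum_congr rfl fun f _ => ?_
      rw [hn f]
      ring
    rw [hGa, hGn]
    ring
  -- apply Ξ and ζ
  have hXi := N.Xi_mul_cancel
  have hXiu : N.Xi *ᵥ ((1 - N.R.transpose) *ᵥ u) = u := by
    rw [Matrix.mulVec_mulVec, hXi, Matrix.one_mulVec]
  have hwl : N.workload ζ (Φ.n t) (Φ.q t) =
      N.workload ζ (Φ.n 0) (Φ.q 0) + t * (∑ e, N.lamv e * ζ e)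
        - (∑ e, ζ e * u e) := by
    simp only [Network.workload]
    rw [hvec]
    rw [Matrix.mulVec_sub, Matrix.mulVec_add, Matrix.mulVec_smul, hXiu]
    have hlam : N.Xi *ᵥ (N.Gam *ᵥ N.rho) = N.lamv := rfl
    rw [hlam]
    simp only [Pi.sub_apply, Pi.add_apply, Pi.smul_apply, smul_eq_mul]
    rw [Finset.mul_sum, ← Finset.sum_add_distrib, ← Finset.sum_sub_distrib]
    refine Finset.sum_congr rfl fun e _ => ?_
    ring
  -- bound the service term
  have hserv : ∑ e, ζ e * N.PiV (Φ.s t) e ≤ t := by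
    have hswap : ∑ e, ζ e * N.PiV (Φ.s t) e =
        ∑ σ ∈ N.S, Φ.s t σ * ∑ e, ζ e * σ e := by
      simp only [Network.PiV, Finset.mul_sum]
      rw [Finset.sum_comm]
      refine Finset.sum_congr rfl fun σ _ => Finset.sum_congr rfl fun e _ => by ring
    rw [hswap]
    calc ∑ σ ∈ N.S, Φ.s t σ * ∑ e, ζ e * σ e
        ≤ ∑ σ ∈ N.S, Φ.s t σ * 1 := by
          refine Finset.sum_le_sum fun σ hσ => ?_
          exact mul_le_mul_of_nonneg_left (hζ.2 σ hσ) (Φ.nonneg_s t ht σ)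
    _ = t := by simp only [mul_one]; exact Φ.eq_s t ht
  have hz : 0 ≤ ∑ e, ζ e * Φ.z t e :=
    Finset.sum_nonneg fun e _ => mul_nonneg (hζ.1 e) (Φ.nonneg_z t ht e)
  have husum : ∑ e, ζ e * u e ≤ t := by
    simp only [hu_def, mul_sub]
    rw [Finset.sum_sub_distrib]
    linarith
  have htval : t * 1 ≤ t * (∑ e, N.lamv e * ζ e) :=
    mul_le_mul_of_nonneg_left hval ht0
  rw [hwl]
  linarith

end Network
end Aux

/-- Lower bound via effective cost: in a critically loaded system,
along any fluid model solution (any policy), the instantaneous cost is bounded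
below by the effective cost of the initial state. -/
theorem cost_lower_bound_effective_cost
    {E F : Type*} [Fintype E] [Fintype F] [DecidableEq E]
    (N : Network E F) (hcrit : N.Leff = 1)
    (T : ℝ) (hT : 0 < T) (Φ : FMS N T)
    (t : ℝ) (ht : t ∈ Set.Icc 0 T) :
    N.effCost (Φ.n 0) (Φ.q 0) ≤ N.cost (Φ.n t) (Φ.q t) := by
  have h0 : (0 : ℝ) ∈ Set.Icc 0 T := ⟨le_refl 0, hT.le⟩
  have hdual : (1 : ℝ) ≤ N.DUAL N.lamv := N.one_le_DUAL hcrit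
  refine csInf_le ⟨0, ?_⟩ ?_
  · rintro v ⟨p, ⟨hp1, hp2, _⟩, rfl⟩
    refine add_nonneg (Finset.sum_nonneg fun f _ => div_nonneg (hp1 f) (N.hμ0 f).le)
      (Finset.sum_nonneg fun e _ => hp2 e)
  · refine ⟨(Φ.n t, Φ.q t), ⟨fun f => Φ.nonneg_n t ht f, fun e => Φ.nonneg_q t ht e,
      fun ζ hζ => ?_⟩, rfl⟩
    have hCR : ζ ∈ N.CR := hζ.1
    have hfeas : N.dualFeasible ζ := hCR.1
    have hval : (1 : ℝ) ≤ ∑ e, N.lamv e * ζ e := by rw [hCR.2]; exact hdual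
    exact N.workload_mono Φ ht h0 ζ hfeas hval
end

section
/- The lifting map Δ : ℝ₊^ℱ × ℝ₊^ℰ → ℝ₊^ℱ × ℝ₊^ℰ, which sends (n,q) to the unique optimal solution of bALGD(n,q), is continuous, and it is positively homogeneous: for all (n,q) ∈ ℝ₊^ℱ × ℝ₊^ℰ and all κ > 0, Δ(κn, κq) = κ Δ(n,q). -/
open Matrix Filter

/-! ### Auxiliary development for Statement 12 -/

namespace Network

variable {E F : Type*} [Fintype E] [Fintype F] [DecidableEq E] (N : Network E F)

private lemma entry_nonneg_pow {A : Matrix E E ℝ} (hA : ∀ e e', 0 ≤ A e e') :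
    ∀ (k : ℕ) (e e' : E), 0 ≤ (A ^ k) e e' := by
  intro k
  induction k with
  | zero =>
    intro e e'
    by_cases h : e = e' <;> simp [Matrix.one_apply, h]
  | succ k ih =>
    intro e e'
    rw [pow_succ, Matrix.mul_apply]
    exact Finset.sum_nonneg fun j _ => mul_nonneg (ih e j) (hA j e')

lemma Xi_nonneg (e e' : E) : 0 ≤ N.Xi e e' := by
  obtain ⟨m, hm⟩ := N.hRnil
  have hA : (N.R.transpose) ^ m = 0 := by
    rw [← Matrix.transpose_pow, hm, Matrix.transpose_zero]
  have hXi : N.Xi = ∑ k ∈ Finset.range m, N.R.transpose ^ k := by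
    unfold Network.Xi
    apply Matrix.inv_eq_right_inv
    rw [mul_neg_geom_sum, hA, sub_zero]
  have hRt : ∀ a b : E, 0 ≤ N.R.transpose a b := by
    intro a b
    rcases N.hR01 b a with h | h <;> simp [Matrix.transpose_apply, h]
  rw [hXi, Matrix.sum_apply]
  exact Finset.sum_nonneg fun k _ => entry_nonneg_pow hRt k e e'

lemma workload_repr (ζ : E → ℝ) (n : F → ℝ) (q : E → ℝ) :
    N.workload ζ n q =
      ∑ e, ζ e * ((∑ e', N.Xi e e' * q e') + ∑ f, N.Xi e (N.iota f) * (n f / N.μ f)) := by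
  unfold Network.workload
  refine Finset.sum_congr rfl fun e _ => ?_
  congr 1
  simp only [Matrix.mulVec, dotProduct, Pi.add_apply, mul_add,
    Finset.sum_add_distrib]
  congr 1
  simp only [Finset.mul_sum]
  rw [Finset.sum_comm]
  refine Finset.sum_congr rfl fun f _ => ?_
  simp only [Network.Gam, Matrix.of_apply, ite_mul, one_mul, zero_mul, mul_ite, mul_zero]
  rw [Finset.sum_ite_eq]
  simp

lemma workload_add (ζ : E → ℝ) (n n' : F → ℝ) (q q' : E → ℝ) :
    N.workload ζ (n + n') (q + q') = N.workload ζ n q + N.workload ζ n' q' := by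
  simp only [workload_repr, Pi.add_apply]
  rw [← Finset.sum_add_distrib]
  refine Finset.sum_congr rfl fun e _ => ?_
  have h1 : ∀ e', N.Xi e e' * (q e' + q' e') = N.Xi e e' * q e' + N.Xi e e' * q' e' :=
    fun e' => by ring
  have h2 : ∀ f, N.Xi e (N.iota f) * ((n f + n' f) / N.μ f)
      = N.Xi e (N.iota f) * (n f / N.μ f) + N.Xi e (N.iota f) * (n' f / N.μ f) :=
    fun f => by ring
  simp only [h1, h2, Finset.sum_add_distrib]
  ring

lemma workload_smul (ζ : E → ℝ) (κ : ℝ) (n : F → ℝ) (q : E → ℝ) :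
    N.workload ζ (κ • n) (κ • q) = κ * N.workload ζ n q := by
  simp only [workload_repr, Pi.smul_apply, smul_eq_mul, Finset.mul_sum]
  refine Finset.sum_congr rfl fun e _ => ?_
  have h1 : ∀ e', N.Xi e e' * (κ * q e') = κ * (N.Xi e e' * q e') := fun e' => by ring
  have h2 : ∀ f, N.Xi e (N.iota f) * (κ * n f / N.μ f)
      = κ * (N.Xi e (N.iota f) * (n f / N.μ f)) := fun f => by ring
  simp only [h1, h2, ← Finset.mul_sum]
  ring

lemma workload_nonneg {ζ : E → ℝ} (hζ : ∀ e, 0 ≤ ζ e) {n : F → ℝ} {q : E → ℝ}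
    (hn : ∀ f, 0 ≤ n f) (hq : ∀ e, 0 ≤ q e) : 0 ≤ N.workload ζ n q := by
  rw [workload_repr]
  refine Finset.sum_nonneg fun e _ => mul_nonneg (hζ e) (add_nonneg ?_ ?_)
  · exact Finset.sum_nonneg fun e' _ => mul_nonneg (N.Xi_nonneg e e') (hq e')
  · exact Finset.sum_nonneg fun f _ =>
      mul_nonneg (N.Xi_nonneg e _) (div_nonneg (hn f) (N.hμ0 f).le)

lemma workload_cont (ζ : E → ℝ) :
    Continuous fun p : (F → ℝ) × (E → ℝ) => N.workload ζ p.1 p.2 := by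
  have hrepr : (fun p : (F → ℝ) × (E → ℝ) => N.workload ζ p.1 p.2)
      = fun p => ∑ e, ζ e * ((∑ e', N.Xi e e' * p.2 e')
        + ∑ f, N.Xi e (N.iota f) * (p.1 f / N.μ f)) := by
    funext p; exact N.workload_repr ζ p.1 p.2
  rw [hrepr]
  refine continuous_finset_sum _ fun e _ => Continuous.mul continuous_const ?_
  refine Continuous.add ?_ ?_
  · exact continuous_finset_sum _ fun e' _ => Continuous.mul continuous_const
      ((continuous_apply e').comp continuous_snd)
  · exact continuous_finset_sum _ fun f _ => Continuous.mul continuous_const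
      (Continuous.div_const ((continuous_apply f).comp continuous_fst) _)

lemma rho_pos (f : F) : 0 < N.rho f := div_pos (N.hν f) (N.hμ0 f)

lemma coeff_pos (α : ℝ) (f : F) : 0 < N.μ f * N.rho f ^ α :=
  mul_pos (N.hμ0 f) (Real.rpow_pos_of_pos (N.rho_pos f) α)

lemma Lyap_nonneg {α : ℝ} {n : F → ℝ} {q : E → ℝ}
    (hn : ∀ f, 0 ≤ n f) (hq : ∀ e, 0 ≤ q e) : 0 ≤ N.Lyap α n q := by
  refine add_nonneg (Finset.sum_nonneg fun f _ => ?_) (Finset.sum_nonneg fun e _ => ?_)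
  · exact div_nonneg (Real.rpow_nonneg (hn f) _) (N.coeff_pos α f).le
  · exact Real.rpow_nonneg (hq e) _

lemma Lyap_cont {α : ℝ} (hα : 0 < α) :
    Continuous fun p : (F → ℝ) × (E → ℝ) => N.Lyap α p.1 p.2 := by
  have hc : Continuous fun x : ℝ => x ^ (1 + α) := by
    rw [continuous_iff_continuousAt]
    intro x
    exact Real.continuousAt_rpow_const x _ (Or.inr (by linarith))
  unfold Network.Lyap
  refine Continuous.add ?_ ?_
  · exact continuous_finset_sum _ fun f _ => Continuous.div_const
      (hc.comp ((continuous_apply f).comp continuous_fst)) _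
  · exact continuous_finset_sum _ fun e _ =>
      hc.comp ((continuous_apply e).comp continuous_snd)

lemma Lyap_smul {α : ℝ} {κ : ℝ} (hκ : 0 ≤ κ) {n : F → ℝ} {q : E → ℝ}
    (hn : ∀ f, 0 ≤ n f) (hq : ∀ e, 0 ≤ q e) :
    N.Lyap α (κ • n) (κ • q) = κ ^ (1 + α) * N.Lyap α n q := by
  unfold Network.Lyap
  simp only [Pi.smul_apply, smul_eq_mul, mul_add, Finset.mul_sum]
  congr 1
  · refine Finset.sum_congr rfl fun f _ => ?_
    rw [Real.mul_rpow hκ (hn f), mul_div_assoc]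
  · refine Finset.sum_congr rfl fun e _ => ?_
    rw [Real.mul_rpow hκ (hq e)]

private lemma rpow_le_bound {α x B : ℝ} (hα : 0 < α) (hx : 0 ≤ x)
    (h : x ^ (1 + α) ≤ B) : x ≤ max 1 B := by
  by_cases h1 : x ≤ 1
  · exact le_trans h1 (le_max_left _ _)
  · push_neg at h1
    have hxx : x ≤ x ^ (1 + α) := by
      calc x = x ^ (1 : ℝ) := (Real.rpow_one x).symm
        _ ≤ x ^ (1 + α) := Real.rpow_le_rpow_of_exponent_le h1.le (by linarith)
    exact le_trans hxx (le_trans h (le_max_right _ _))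

lemma Lyap_coord_bound {α : ℝ} (hα : 0 < α) {p : (F → ℝ) × (E → ℝ)}
    (h1 : ∀ f, 0 ≤ p.1 f) (h2 : ∀ e, 0 ≤ p.2 e) {B : ℝ}
    (hB : N.Lyap α p.1 p.2 ≤ B) :
    (∀ f, p.1 f ≤ max 1 (B * (N.μ f * N.rho f ^ α))) ∧ (∀ e, p.2 e ≤ max 1 B) := by
  have hterm1 : ∀ f, 0 ≤ p.1 f ^ (1 + α) / (N.μ f * N.rho f ^ α) :=
    fun f => div_nonneg (Real.rpow_nonneg (h1 f) _) (N.coeff_pos α f).le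
  have hterm2 : ∀ e, 0 ≤ p.2 e ^ (1 + α) := fun e => Real.rpow_nonneg (h2 e) _
  have hs2 : 0 ≤ ∑ e, p.2 e ^ (1 + α) := Finset.sum_nonneg fun e _ => hterm2 e
  have hs1 : 0 ≤ ∑ f, p.1 f ^ (1 + α) / (N.μ f * N.rho f ^ α) :=
    Finset.sum_nonneg fun f _ => hterm1 f
  unfold Network.Lyap at hB
  constructor
  · intro f
    have h3 : p.1 f ^ (1 + α) / (N.μ f * N.rho f ^ α)
        ≤ ∑ f', p.1 f' ^ (1 + α) / (N.μ f' * N.rho f' ^ α) :=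
      Finset.single_le_sum (fun f' _ => hterm1 f') (Finset.mem_univ f)
    have h5 : p.1 f ^ (1 + α) ≤ B * (N.μ f * N.rho f ^ α) :=
      (div_le_iff₀ (N.coeff_pos α f)).mp (by linarith)
    exact rpow_le_bound hα (h1 f) h5
  · intro e
    have h3 : p.2 e ^ (1 + α) ≤ ∑ e', p.2 e' ^ (1 + α) :=
      Finset.single_le_sum (fun e' _ => hterm2 e') (Finset.mem_univ e)
    exact rpow_le_bound hα (h2 e) (by linarith)

/-- a compact box containing all nonnegative states of Lyapunov value at most `B`. -/
def box (α B : ℝ) : Set ((F → ℝ) × (E → ℝ)) :=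
  (Set.univ.pi fun f => Set.Icc 0 (max 1 (B * (N.μ f * N.rho f ^ α)))) ×ˢ
    (Set.univ.pi fun _ : E => Set.Icc 0 (max 1 B))

lemma box_compact (α B : ℝ) : IsCompact (N.box α B) :=
  (isCompact_univ_pi fun _ => isCompact_Icc).prod (isCompact_univ_pi fun _ => isCompact_Icc)

lemma mem_box {α : ℝ} (hα : 0 < α) {p : (F → ℝ) × (E → ℝ)}
    (h1 : ∀ f, 0 ≤ p.1 f) (h2 : ∀ e, 0 ≤ p.2 e) {B : ℝ}
    (hB : N.Lyap α p.1 p.2 ≤ B) : p ∈ N.box α B := by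
  obtain ⟨hb1, hb2⟩ := N.Lyap_coord_bound hα h1 h2 hB
  exact ⟨fun f _ => ⟨h1 f, hb1 f⟩, fun e _ => ⟨h2 e, hb2 e⟩⟩

private lemma half_rpow_le {α a b : ℝ} (hα : 0 < α) (ha : 0 ≤ a) (hb : 0 ≤ b) :
    (1 / 2 * (a + b)) ^ (1 + α) ≤ (a ^ (1 + α) + b ^ (1 + α)) / 2 := by
  have h := (strictConvexOn_rpow (by linarith : (1:ℝ) < 1 + α)).convexOn.2
    (Set.mem_Ici.mpr ha) (Set.mem_Ici.mpr hb)
    (by norm_num : (0:ℝ) ≤ 1/2) (by norm_num : (0:ℝ) ≤ 1/2) (by norm_num)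
  simp only [smul_eq_mul] at h
  have he : 1 / 2 * (a + b) = 1 / 2 * a + 1 / 2 * b := by ring
  rw [he]
  linarith

private lemma half_rpow_lt {α a b : ℝ} (hα : 0 < α) (ha : 0 ≤ a) (hb : 0 ≤ b)
    (hab : a ≠ b) :
    (1 / 2 * (a + b)) ^ (1 + α) < (a ^ (1 + α) + b ^ (1 + α)) / 2 := by
  have h := (strictConvexOn_rpow (by linarith : (1:ℝ) < 1 + α)).2
    (Set.mem_Ici.mpr ha) (Set.mem_Ici.mpr hb) hab
    (by norm_num : (0:ℝ) < 1/2) (by norm_num : (0:ℝ) < 1/2) (by norm_num)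
  simp only [smul_eq_mul] at h
  have he : 1 / 2 * (a + b) = 1 / 2 * a + 1 / 2 * b := by ring
  rw [he]
  linarith

lemma Lyap_midpoint_lt {α : ℝ} (hα : 0 < α) {p p' : (F → ℝ) × (E → ℝ)}
    (hp1 : ∀ f, 0 ≤ p.1 f) (hp2 : ∀ e, 0 ≤ p.2 e)
    (hp1' : ∀ f, 0 ≤ p'.1 f) (hp2' : ∀ e, 0 ≤ p'.2 e) (hne : p ≠ p') :
    N.Lyap α ((1 / 2 : ℝ) • (p + p')).1 ((1 / 2 : ℝ) • (p + p')).2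
      < (N.Lyap α p.1 p.2 + N.Lyap α p'.1 p'.2) / 2 := by
  have hmid1 : ∀ f, ((1 / 2 : ℝ) • (p + p')).1 f = 1 / 2 * (p.1 f + p'.1 f) := by
    intro f; simp [Prod.smul_fst, Prod.fst_add]; ring
  have hmid2 : ∀ e, ((1 / 2 : ℝ) • (p + p')).2 e = 1 / 2 * (p.2 e + p'.2 e) := by
    intro e; simp [Prod.smul_snd, Prod.snd_add]; ring
  have hfle : ∀ f, ((1 / 2 : ℝ) • (p + p')).1 f ^ (1 + α) / (N.μ f * N.rho f ^ α)
      ≤ (p.1 f ^ (1 + α) / (N.μ f * N.rho f ^ α)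
          + p'.1 f ^ (1 + α) / (N.μ f * N.rho f ^ α)) / 2 := by
    intro f
    rw [hmid1 f]
    have h := half_rpow_le hα (hp1 f) (hp1' f)
    have hc := N.coeff_pos α f
    calc (1 / 2 * (p.1 f + p'.1 f)) ^ (1 + α) / (N.μ f * N.rho f ^ α)
        ≤ ((p.1 f ^ (1 + α) + p'.1 f ^ (1 + α)) / 2) / (N.μ f * N.rho f ^ α) :=
          (div_le_div_iff_of_pos_right hc).mpr h
      _ = (p.1 f ^ (1 + α) / (N.μ f * N.rho f ^ α)
          + p'.1 f ^ (1 + α) / (N.μ f * N.rho f ^ α)) / 2 := by ring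
  have hele : ∀ e, ((1 / 2 : ℝ) • (p + p')).2 e ^ (1 + α)
      ≤ (p.2 e ^ (1 + α) + p'.2 e ^ (1 + α)) / 2 := by
    intro e
    rw [hmid2 e]
    exact half_rpow_le hα (hp2 e) (hp2' e)
  have hsum : (N.Lyap α p.1 p.2 + N.Lyap α p'.1 p'.2) / 2
      = (∑ f, (p.1 f ^ (1 + α) / (N.μ f * N.rho f ^ α)
          + p'.1 f ^ (1 + α) / (N.μ f * N.rho f ^ α)) / 2)
        + ∑ e, (p.2 e ^ (1 + α) + p'.2 e ^ (1 + α)) / 2 := by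
    unfold Network.Lyap
    rw [← Finset.sum_div, ← Finset.sum_div, Finset.sum_add_distrib, Finset.sum_add_distrib]
    ring
  rw [hsum]
  unfold Network.Lyap
  by_cases hfst : p.1 = p'.1
  · have hsnd : p.2 ≠ p'.2 := by
      intro h2; exact hne (Prod.ext hfst h2)
    obtain ⟨e₀, he₀⟩ := Function.ne_iff.mp hsnd
    have hA : ∑ f, ((1 / 2 : ℝ) • (p + p')).1 f ^ (1 + α) / (N.μ f * N.rho f ^ α)
        ≤ ∑ f, (p.1 f ^ (1 + α) / (N.μ f * N.rho f ^ α)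
            + p'.1 f ^ (1 + α) / (N.μ f * N.rho f ^ α)) / 2 :=
      Finset.sum_le_sum fun f _ => hfle f
    have hB : ∑ e, ((1 / 2 : ℝ) • (p + p')).2 e ^ (1 + α)
        < ∑ e, (p.2 e ^ (1 + α) + p'.2 e ^ (1 + α)) / 2 := by
      refine Finset.sum_lt_sum (fun e _ => hele e) ⟨e₀, Finset.mem_univ e₀, ?_⟩
      rw [hmid2 e₀]
      exact half_rpow_lt hα (hp2 e₀) (hp2' e₀) he₀
    linarith
  · obtain ⟨f₀, hf₀⟩ := Function.ne_iff.mp hfst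
    have hA : ∑ f, ((1 / 2 : ℝ) • (p + p')).1 f ^ (1 + α) / (N.μ f * N.rho f ^ α)
        < ∑ f, (p.1 f ^ (1 + α) / (N.μ f * N.rho f ^ α)
            + p'.1 f ^ (1 + α) / (N.μ f * N.rho f ^ α)) / 2 := by
      refine Finset.sum_lt_sum (fun f _ => hfle f) ⟨f₀, Finset.mem_univ f₀, ?_⟩
      rw [hmid1 f₀]
      have hc := N.coeff_pos α f₀
      calc (1 / 2 * (p.1 f₀ + p'.1 f₀)) ^ (1 + α) / (N.μ f₀ * N.rho f₀ ^ α)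
          < ((p.1 f₀ ^ (1 + α) + p'.1 f₀ ^ (1 + α)) / 2) / (N.μ f₀ * N.rho f₀ ^ α) :=
            (div_lt_div_iff_of_pos_right hc).mpr (half_rpow_lt hα (hp1 f₀) (hp1' f₀) hf₀)
        _ = (p.1 f₀ ^ (1 + α) / (N.μ f₀ * N.rho f₀ ^ α)
            + p'.1 f₀ ^ (1 + α) / (N.μ f₀ * N.rho f₀ ^ α)) / 2 := by ring
    have hB : ∑ e, ((1 / 2 : ℝ) • (p + p')).2 e ^ (1 + α)
        ≤ ∑ e, (p.2 e ^ (1 + α) + p'.2 e ^ (1 + α)) / 2 :=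
      Finset.sum_le_sum fun e _ => hele e
    linarith

lemma feas_self {n : F → ℝ} {q : E → ℝ} (hn : ∀ f, 0 ≤ n f) (hq : ∀ e, 0 ≤ q e) :
    N.bALGDFeas n q (n, q) := ⟨hn, hq, fun ζ _ => le_refl _⟩

lemma feas_closed (n : F → ℝ) (q : E → ℝ) :
    IsClosed {p : (F → ℝ) × (E → ℝ) | N.bALGDFeas n q p} := by
  have hrepr : {p : (F → ℝ) × (E → ℝ) | N.bALGDFeas n q p}
      = ((⋂ f, {p : (F → ℝ) × (E → ℝ) | 0 ≤ p.1 f})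
        ∩ ⋂ e, {p : (F → ℝ) × (E → ℝ) | 0 ≤ p.2 e})
        ∩ ⋂ ζ ∈ N.CRstar, {p : (F → ℝ) × (E → ℝ) |
            N.workload ζ n q ≤ N.workload ζ p.1 p.2} := by
    ext p
    simp only [Set.mem_setOf_eq, Set.mem_inter_iff, Set.mem_iInter, Network.bALGDFeas]
    tauto
  rw [hrepr]
  refine IsClosed.inter (IsClosed.inter ?_ ?_) ?_
  · exact isClosed_iInter fun f =>
      isClosed_le continuous_const ((continuous_apply f).comp continuous_fst)
  · exact isClosed_iInter fun e =>
      isClosed_le continuous_const ((continuous_apply e).comp continuous_snd)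
  · exact isClosed_biInter fun ζ _ => isClosed_le continuous_const (N.workload_cont ζ)

lemma feas_mid {n : F → ℝ} {q : E → ℝ} {p p' : (F → ℝ) × (E → ℝ)}
    (h : N.bALGDFeas n q p) (h' : N.bALGDFeas n q p') :
    N.bALGDFeas n q ((1 / 2 : ℝ) • (p + p')) := by
  refine ⟨fun f => ?_, fun e => ?_, fun ζ hζ => ?_⟩
  · have := add_nonneg (h.1 f) (h'.1 f)
    simp only [Prod.smul_fst, Prod.fst_add, Pi.smul_apply, Pi.add_apply, smul_eq_mul]
    linarith
  · have := add_nonneg (h.2.1 e) (h'.2.1 e)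
    simp only [Prod.smul_snd, Prod.snd_add, Pi.smul_apply, Pi.add_apply, smul_eq_mul]
    linarith
  · have hw : N.workload ζ ((1 / 2 : ℝ) • (p + p')).1 ((1 / 2 : ℝ) • (p + p')).2
        = 1 / 2 * (N.workload ζ p.1 p.2 + N.workload ζ p'.1 p'.2) := by
      have h1 : ((1 / 2 : ℝ) • (p + p')).1 = (1 / 2 : ℝ) • (p.1 + p'.1) := rfl
      have h2 : ((1 / 2 : ℝ) • (p + p')).2 = (1 / 2 : ℝ) • (p.2 + p'.2) := rfl
      rw [h1, h2, N.workload_smul, N.workload_add]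
    rw [hw]
    have h3 := h.2.2 ζ hζ
    have h4 := h'.2.2 ζ hζ
    linarith

lemma exUniq {α : ℝ} (hα : 0 < α) {n : F → ℝ} {q : E → ℝ}
    (hn : ∀ f, 0 ≤ n f) (hq : ∀ e, 0 ≤ q e) :
    ∃! p : (F → ℝ) × (E → ℝ), N.bALGDOpt α n q p := by
  set B := N.Lyap α n q with hB
  set K := {p : (F → ℝ) × (E → ℝ) | N.bALGDFeas n q p ∧ N.Lyap α p.1 p.2 ≤ B} with hK
  have hKne : ((n, q) : (F → ℝ) × (E → ℝ)) ∈ K := ⟨N.feas_self hn hq, le_refl _⟩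
  have hKclosed : IsClosed K := by
    have : K = {p : (F → ℝ) × (E → ℝ) | N.bALGDFeas n q p}
        ∩ (fun p : (F → ℝ) × (E → ℝ) => N.Lyap α p.1 p.2) ⁻¹' Set.Iic B := by
      ext p; simp [hK, Set.mem_setOf_eq]
    rw [this]
    exact (N.feas_closed n q).inter (isClosed_Iic.preimage (N.Lyap_cont hα))
  have hKsub : K ⊆ N.box α B := fun p hp => N.mem_box hα hp.1.1 hp.1.2.1 hp.2
  have hKcomp : IsCompact K := (N.box_compact α B).of_isClosed_subset hKclosed hKsub
  obtain ⟨p₀, hp₀K, hmin⟩ := hKcomp.exists_isMinOn ⟨(n, q), hKne⟩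
    ((N.Lyap_cont hα).continuousOn)
  have hmin' : ∀ p' ∈ K, N.Lyap α p₀.1 p₀.2 ≤ N.Lyap α p'.1 p'.2 := fun p' hp' => hmin hp'
  have hopt : N.bALGDOpt α n q p₀ := by
    refine ⟨hp₀K.1, fun p' hp' => ?_⟩
    by_cases hcase : N.Lyap α p'.1 p'.2 ≤ B
    · exact hmin' p' ⟨hp', hcase⟩
    · push_neg at hcase
      have := hmin' (n, q) hKne
      exact le_trans this (le_of_lt hcase)
  refine ⟨p₀, hopt, fun y hy => ?_⟩
  by_contra hne
  have h1 : N.Lyap α y.1 y.2 ≤ N.Lyap α p₀.1 p₀.2 := hy.2 p₀ hopt.1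
  have h2 : N.Lyap α p₀.1 p₀.2 ≤ N.Lyap α y.1 y.2 := hopt.2 y hy.1
  have hmid := N.feas_mid hy.1 hopt.1
  have h3 := hopt.2 _ hmid
  have h4 := N.Lyap_midpoint_lt hα hy.1.1 hy.1.2.1 hopt.1.1 hopt.1.2.1 hne
  linarith

lemma lift_opt {α : ℝ} (hα : 0 < α) {p : (F → ℝ) × (E → ℝ)}
    (hn : ∀ f, 0 ≤ p.1 f) (hq : ∀ e, 0 ≤ p.2 e) :
    N.bALGDOpt α p.1 p.2 (N.lift α p)
      ∧ ∀ y, N.bALGDOpt α p.1 p.2 y → y = N.lift α p := by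
  have h : ∃! p' : (F → ℝ) × (E → ℝ), N.bALGDOpt α p.1 p.2 p' := N.exUniq hα hn hq
  unfold Network.lift
  rw [dif_pos h]
  exact ⟨h.choose_spec.1, fun y hy => h.choose_spec.2 y hy⟩

end Network

namespace Network

variable {E F : Type*} [Fintype E] [Fintype F] [DecidableEq E] (N : Network E F)

lemma lift_homog {α : ℝ} (hα : 0 < α) (n : F → ℝ) (q : E → ℝ)
    (hn : ∀ f, 0 ≤ n f) (hq : ∀ e, 0 ≤ q e) {κ : ℝ} (hκ : 0 < κ) :
    N.lift α (κ • n, κ • q) = κ • N.lift α (n, q) := by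
  set Δ := N.lift α (n, q) with hΔdef
  have hopt : N.bALGDOpt α n q Δ := (N.lift_opt hα (p := (n, q)) hn hq).1
  have hΔ1 : ∀ f, 0 ≤ Δ.1 f := hopt.1.1
  have hΔ2 : ∀ e, 0 ≤ Δ.2 e := hopt.1.2.1
  have hκn : ∀ f, 0 ≤ (κ • n) f := fun f => by
    simp only [Pi.smul_apply, smul_eq_mul]; exact mul_nonneg hκ.le (hn f)
  have hκq : ∀ e, 0 ≤ (κ • q) e := fun e => by
    simp only [Pi.smul_apply, smul_eq_mul]; exact mul_nonneg hκ.le (hq e)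
  have hfst : (κ • Δ).1 = κ • Δ.1 := rfl
  have hsnd : (κ • Δ).2 = κ • Δ.2 := rfl
  have hoptκ : N.bALGDOpt α (κ • n) (κ • q) (κ • Δ) := by
    refine ⟨⟨fun f => ?_, fun e => ?_, fun ζ hζ => ?_⟩, fun p' hp' => ?_⟩
    · rw [hfst]; simp only [Pi.smul_apply, smul_eq_mul]
      exact mul_nonneg hκ.le (hΔ1 f)
    · rw [hsnd]; simp only [Pi.smul_apply, smul_eq_mul]
      exact mul_nonneg hκ.le (hΔ2 e)
    · rw [hfst, hsnd, N.workload_smul, N.workload_smul]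
      exact mul_le_mul_of_nonneg_left (hopt.1.2.2 ζ hζ) hκ.le
    · -- optimality: compare with `κ⁻¹ • p'`
      have hκ' : (0 : ℝ) < κ⁻¹ := inv_pos.mpr hκ
      have hyfeas : N.bALGDFeas n q (κ⁻¹ • p') := by
        refine ⟨fun f => ?_, fun e => ?_, fun ζ hζ => ?_⟩
        · simp only [Prod.smul_fst, Pi.smul_apply, smul_eq_mul]
          exact mul_nonneg hκ'.le (hp'.1 f)
        · simp only [Prod.smul_snd, Pi.smul_apply, smul_eq_mul]
          exact mul_nonneg hκ'.le (hp'.2.1 e)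
        · have h1 : N.workload ζ (κ⁻¹ • p').1 (κ⁻¹ • p').2
              = κ⁻¹ * N.workload ζ p'.1 p'.2 := by
            have e1 : (κ⁻¹ • p').1 = κ⁻¹ • p'.1 := rfl
            have e2 : (κ⁻¹ • p').2 = κ⁻¹ • p'.2 := rfl
            rw [e1, e2, N.workload_smul]
          have h2 := hp'.2.2 ζ hζ
          rw [N.workload_smul] at h2
          rw [h1]
          calc N.workload ζ n q = κ⁻¹ * (κ * N.workload ζ n q) := by
                field_simp
            _ ≤ κ⁻¹ * N.workload ζ p'.1 p'.2 :=
                mul_le_mul_of_nonneg_left h2 hκ'.le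
      have hLy : N.Lyap α Δ.1 Δ.2 ≤ N.Lyap α (κ⁻¹ • p').1 (κ⁻¹ • p').2 :=
        hopt.2 _ hyfeas
      have hLκ : N.Lyap α (κ • Δ).1 (κ • Δ).2 = κ ^ (1 + α) * N.Lyap α Δ.1 Δ.2 := by
        rw [hfst, hsnd]; exact N.Lyap_smul hκ.le hΔ1 hΔ2
      have hLκ' : N.Lyap α (κ⁻¹ • p').1 (κ⁻¹ • p').2
          = (κ⁻¹) ^ (1 + α) * N.Lyap α p'.1 p'.2 := by
        have e1 : (κ⁻¹ • p').1 = κ⁻¹ • p'.1 := rfl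
        have e2 : (κ⁻¹ • p').2 = κ⁻¹ • p'.2 := rfl
        rw [e1, e2]; exact N.Lyap_smul hκ'.le hp'.1 hp'.2.1
      have hprod : κ ^ (1 + α) * (κ⁻¹) ^ (1 + α) = 1 := by
        rw [← Real.mul_rpow hκ.le hκ'.le, mul_inv_cancel₀ (ne_of_gt hκ), Real.one_rpow]
      calc N.Lyap α (κ • Δ).1 (κ • Δ).2 = κ ^ (1 + α) * N.Lyap α Δ.1 Δ.2 := hLκ
        _ ≤ κ ^ (1 + α) * N.Lyap α (κ⁻¹ • p').1 (κ⁻¹ • p').2 :=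
            mul_le_mul_of_nonneg_left hLy (Real.rpow_nonneg hκ.le _)
        _ = κ ^ (1 + α) * ((κ⁻¹) ^ (1 + α) * N.Lyap α p'.1 p'.2) := by rw [hLκ']
        _ = N.Lyap α p'.1 p'.2 := by rw [← mul_assoc, hprod, one_mul]
  exact ((N.lift_opt hα (p := (κ • n, κ • q)) hκn hκq).2 (κ • Δ) hoptκ).symm

lemma lift_contOn {α : ℝ} (hα : 0 < α) :
    ContinuousOn (N.lift α)
      {p : (F → ℝ) × (E → ℝ) | (∀ f, 0 ≤ p.1 f) ∧ (∀ e, 0 ≤ p.2 e)} := by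
  set s := {p : (F → ℝ) × (E → ℝ) | (∀ f, 0 ≤ p.1 f) ∧ (∀ e, 0 ≤ p.2 e)} with hs
  intro p hp
  have hlift := N.lift_opt hα hp.1 hp.2
  set Δp := N.lift α p with hΔp
  unfold ContinuousWithinAt
  apply tendsto_of_subseq_tendsto
  intro ns hns
  have hmem : ∀ᶠ k in atTop, ns k ∈ s := hns.eventually eventually_mem_nhdsWithin
  obtain ⟨K₀, hK₀⟩ := Filter.eventually_atTop.mp hmem
  set u : ℕ → (F → ℝ) × (E → ℝ) := fun k => ns (k + K₀) with hu
  have hus : ∀ k, u k ∈ s := fun k => hK₀ _ (Nat.le_add_left _ _)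
  have hut : Tendsto u atTop (nhds p) :=
    (hns.mono_right nhdsWithin_le_nhds).comp (tendsto_add_atTop_nat K₀)
  set v : ℕ → (F → ℝ) × (E → ℝ) := fun k => N.lift α (u k) with hv
  have hvopt : ∀ k, N.bALGDOpt α (u k).1 (u k).2 (v k) :=
    fun k => (N.lift_opt hα (hus k).1 (hus k).2).1
  -- uniform bound on the Lyapunov values of `v`
  have hLt : Tendsto (fun k => N.Lyap α (u k).1 (u k).2) atTop (nhds (N.Lyap α p.1 p.2)) :=
    ((N.Lyap_cont hα).tendsto p).comp hut
  obtain ⟨B, hBmem⟩ := hLt.bddAbove_range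
  have hvB : ∀ k, N.Lyap α (v k).1 (v k).2 ≤ B := fun k =>
    le_trans ((hvopt k).2 _ (N.feas_self (hus k).1 (hus k).2)) (hBmem ⟨k, rfl⟩)
  have hvbox : ∀ k, v k ∈ N.box α B := fun k =>
    N.mem_box hα (hvopt k).1.1 (hvopt k).1.2.1 (hvB k)
  obtain ⟨a, -, φ, hφ, hva⟩ :=
    tendsto_subseq_of_bounded (N.box_compact α B).isBounded hvbox
  -- the limit `a` is nonnegative
  have hcomp1 : ∀ f, Tendsto (fun k => (v (φ k)).1 f) atTop (nhds (a.1 f)) := fun f =>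
    (((continuous_apply f).comp continuous_fst).tendsto a).comp hva
  have hcomp2 : ∀ e, Tendsto (fun k => (v (φ k)).2 e) atTop (nhds (a.2 e)) := fun e =>
    (((continuous_apply e).comp continuous_snd).tendsto a).comp hva
  have ha1 : ∀ f, 0 ≤ a.1 f := fun f =>
    ge_of_tendsto (hcomp1 f) (Filter.Eventually.of_forall fun k => (hvopt (φ k)).1.1 f)
  have ha2 : ∀ e, 0 ≤ a.2 e := fun e =>
    ge_of_tendsto (hcomp2 e) (Filter.Eventually.of_forall fun k => (hvopt (φ k)).1.2.1 e)
  have huφ : Tendsto (fun k => u (φ k)) atTop (nhds p) := hut.comp hφ.tendsto_atTop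
  -- the limit `a` is feasible for `(p.1, p.2)`
  have hafeas : N.bALGDFeas p.1 p.2 a := by
    refine ⟨ha1, ha2, fun ζ hζ => ?_⟩
    have hw1 : Tendsto (fun k => N.workload ζ (u (φ k)).1 (u (φ k)).2) atTop
        (nhds (N.workload ζ p.1 p.2)) := ((N.workload_cont ζ).tendsto p).comp huφ
    have hw2 : Tendsto (fun k => N.workload ζ (v (φ k)).1 (v (φ k)).2) atTop
        (nhds (N.workload ζ a.1 a.2)) := ((N.workload_cont ζ).tendsto a).comp hva
    exact le_of_tendsto_of_tendsto' hw1 hw2 fun k => (hvopt (φ k)).1.2.2 ζ hζ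
  -- an auxiliary feasible sequence converging to `Δp`
  set g : (F → ℝ) × (E → ℝ) → (F → ℝ) × (E → ℝ) :=
    fun x => (fun f => Δp.1 f + |x.1 f - p.1 f|, fun e => Δp.2 e + |x.2 e - p.2 e|)
    with hg
  have hgc : Continuous g := by
    refine Continuous.prodMk (continuous_pi fun f => ?_) (continuous_pi fun e => ?_)
    · exact continuous_const.add
        (((continuous_apply f).comp continuous_fst).sub continuous_const).abs
    · exact continuous_const.add
        (((continuous_apply e).comp continuous_snd).sub continuous_const).abs
  have hgp : g p = Δp := by
    refine Prod.ext (funext fun f => ?_) (funext fun e => ?_) <;>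
      simp [hg, sub_self, abs_zero]
  set y : ℕ → (F → ℝ) × (E → ℝ) := fun k => g (u k) with hy
  have hyt : Tendsto y atTop (nhds Δp) := by
    have := (hgc.tendsto p).comp hut
    rwa [hgp] at this
  have hΔ1 : ∀ f, 0 ≤ Δp.1 f := hlift.1.1.1
  have hΔ2 : ∀ e, 0 ≤ Δp.2 e := hlift.1.1.2.1
  have hyfeas : ∀ k, N.bALGDFeas (u k).1 (u k).2 (y k) := by
    intro k
    refine ⟨fun f => add_nonneg (hΔ1 f) (abs_nonneg _),
      fun e => add_nonneg (hΔ2 e) (abs_nonneg _), fun ζ hζ => ?_⟩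
    have hζnn : ∀ e, 0 ≤ ζ e := hζ.1.1.1
    -- decompose `y k`
    have hy1 : (y k).1 = Δp.1 + fun f => |(u k).1 f - p.1 f| := rfl
    have hy2 : (y k).2 = Δp.2 + fun e => |(u k).2 e - p.2 e| := rfl
    have hsplit : N.workload ζ (y k).1 (y k).2
        = N.workload ζ Δp.1 Δp.2
          + N.workload ζ (fun f => |(u k).1 f - p.1 f|) (fun e => |(u k).2 e - p.2 e|) := by
      rw [hy1, hy2, N.workload_add]
    have hsplit2 : N.workload ζ (u k).1 (u k).2
        = N.workload ζ p.1 p.2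
          + N.workload ζ ((u k).1 - p.1) ((u k).2 - p.2) := by
      rw [← N.workload_add]
      congr 1 <;> simp
    have habs : N.workload ζ ((u k).1 - p.1) ((u k).2 - p.2)
        ≤ N.workload ζ (fun f => |(u k).1 f - p.1 f|) (fun e => |(u k).2 e - p.2 e|) := by
      have hdiff : N.workload ζ (fun f => |(u k).1 f - p.1 f|) (fun e => |(u k).2 e - p.2 e|)
          = N.workload ζ ((u k).1 - p.1) ((u k).2 - p.2)
            + N.workload ζ ((fun f => |(u k).1 f - p.1 f|) - ((u k).1 - p.1))
              ((fun e => |(u k).2 e - p.2 e|) - ((u k).2 - p.2)) := by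
        rw [← N.workload_add]
        congr 1 <;> funext x <;> simp
      rw [hdiff]
      have hnn : 0 ≤ N.workload ζ ((fun f => |(u k).1 f - p.1 f|) - ((u k).1 - p.1))
          ((fun e => |(u k).2 e - p.2 e|) - ((u k).2 - p.2)) := by
        refine N.workload_nonneg hζnn (fun f => ?_) (fun e => ?_)
        · simp only [Pi.sub_apply]
          have := neg_abs_le ((u k).1 f - p.1 f)
          have := le_abs_self ((u k).1 f - p.1 f)
          linarith
        · simp only [Pi.sub_apply]
          have := le_abs_self ((u k).2 e - p.2 e)
          linarith
      linarith
    have hfeasΔ : N.workload ζ p.1 p.2 ≤ N.workload ζ Δp.1 Δp.2 := hlift.1.1.2.2 ζ hζ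
    linarith [hsplit, hsplit2, habs, hfeasΔ]
  -- Lyapunov comparison in the limit
  have hL1 : Tendsto (fun k => N.Lyap α (v (φ k)).1 (v (φ k)).2) atTop
      (nhds (N.Lyap α a.1 a.2)) := ((N.Lyap_cont hα).tendsto a).comp hva
  have hL2 : Tendsto (fun k => N.Lyap α (y (φ k)).1 (y (φ k)).2) atTop
      (nhds (N.Lyap α Δp.1 Δp.2)) :=
    ((N.Lyap_cont hα).tendsto Δp).comp (hyt.comp hφ.tendsto_atTop)
  have hLa : N.Lyap α a.1 a.2 ≤ N.Lyap α Δp.1 Δp.2 :=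
    le_of_tendsto_of_tendsto' hL1 hL2 fun k => (hvopt (φ k)).2 _ (hyfeas (φ k))
  have haopt : N.bALGDOpt α p.1 p.2 a :=
    ⟨hafeas, fun p' hp' => le_trans hLa (hlift.1.2 p' hp')⟩
  have ha : a = Δp := hlift.2 a haopt
  refine ⟨fun k => φ k + K₀, ?_⟩
  have hfun : (fun k => N.lift α (ns (φ k + K₀))) = v ∘ φ := rfl
  rw [hfun, ← hΔp, ← ha]
  exact hva

end Network

/-- The lifting map `Δ` is continuous on the nonnegative orthant
and positively homogeneous. -/
theorem lift_continuous_and_homogeneous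
    {E F : Type*} [Fintype E] [Fintype F] [DecidableEq E]
    (N : Network E F) (α : ℝ) (hα : 0 < α) (hα1 : α ≠ 1) :
    ContinuousOn (N.lift α)
      {p : (F → ℝ) × (E → ℝ) | (∀ f, 0 ≤ p.1 f) ∧ (∀ e, 0 ≤ p.2 e)} ∧
    ∀ (n : F → ℝ) (q : E → ℝ), (∀ f, 0 ≤ n f) → (∀ e, 0 ≤ q e) →
      ∀ κ : ℝ, 0 < κ → N.lift α (κ • n, κ • q) = κ • N.lift α (n, q) := by
  exact ⟨N.lift_contOn hα, fun n q hn hq κ hκ => N.lift_homog hα n q hn hq hκ⟩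
end

section
/- Suppose the system is critically loaded (Leff(ρ) = 1) and ΞΓρ > 0 componentwise. Let (n,q) ∈ ℝ₊^ℱ × ℝ₊^ℰ satisfy (Γρ)ᵀ q^α = max_{π∈𝒮} πᵀ(I − R) q^α (where q^α is the componentwise α-th power) and n_f = ρ_f q_{ι(f)} for all f ∈ ℱ. Then (n,q) is a fixed point of the lifting map: Δ(n,q) = (n,q). -/
open Matrix Filter

section AuxLemmas

variable {E F : Type*} [Fintype E] [Fintype F] [DecidableEq E] (N : Network E F)

/-- schedules have entries in `[0,1]`, in particular nonnegative. -/
lemma Network.sched_nonneg {σ : E → ℝ} (hσ : σ ∈ N.S) (e : E) : 0 ≤ σ e := by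
  rcases N.hS01 σ hσ e with h | h <;> rw [h] <;> norm_num

lemma Network.primal_nonempty (l : E → ℝ) :
    {v | ∃ s : (E → ℝ) → ℝ, (∀ σ, 0 ≤ s σ) ∧ (∀ e, l e ≤ N.PiV s e) ∧
      v = ∑ σ ∈ N.S, s σ}.Nonempty := by
  classical
  set δ : E → (E → ℝ) := fun e => (fun e' => if e' = e then (1 : ℝ) else 0) with hδ
  have hinj : ∀ e₁ e₂ : E, δ e₁ = δ e₂ → e₁ = e₂ := by
    intro e₁ e₂ h
    have := congrFun h e₁
    simp only [δ, if_pos rfl] at this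
    by_contra hne
    rw [if_neg hne] at this
    norm_num at this
  set s : (E → ℝ) → ℝ := fun σ => ∑ e, if σ = δ e then max (l e) 0 else 0 with hs
  have hs0 : ∀ σ, 0 ≤ s σ := by
    intro σ
    apply Finset.sum_nonneg
    intro e _
    split <;> [exact le_max_right _ _; exact le_rfl]
  have hsδ : ∀ e, s (δ e) = max (l e) 0 := by
    intro e
    show (∑ e', if δ e = δ e' then max (l e') 0 else 0) = max (l e) 0
    rw [Finset.sum_eq_single e]
    · rw [if_pos rfl]
    · intro e' _ hne
      rw [if_neg fun h => hne (hinj _ _ h.symm)]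
    · intro h; exact absurd (Finset.mem_univ e) h
  refine ⟨∑ σ ∈ N.S, s σ, s, hs0, fun e => ?_, rfl⟩
  have h1 : s (δ e) * δ e e ≤ N.PiV s e := by
    apply Finset.single_le_sum (f := fun σ => s σ * σ e)
    · intro σ hσ
      exact mul_nonneg (hs0 σ) (N.sched_nonneg hσ e)
    · exact N.hSsingle e
  have h2 : δ e e = 1 := if_pos rfl
  rw [h2, mul_one, hsδ] at h1
  exact le_trans (le_max_left _ _) h1

/-- weak LP duality: any dual-feasible value is at most the primal value. -/
lemma Network.weak_duality {ζ : E → ℝ} (hζ : N.dualFeasible ζ) :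
    ∑ e, N.lamv e * ζ e ≤ N.Leff := by
  classical
  apply le_csInf (N.primal_nonempty N.lamv)
  rintro v ⟨s, hs0, hsc, rfl⟩
  calc ∑ e, N.lamv e * ζ e
      ≤ ∑ e, N.PiV s e * ζ e := by
        apply Finset.sum_le_sum
        intro e _
        exact mul_le_mul_of_nonneg_right (hsc e) (hζ.1 e)
    _ = ∑ σ ∈ N.S, s σ * ∑ e, ζ e * σ e := by
        simp only [Network.PiV, Finset.sum_mul]
        rw [Finset.sum_comm]
        refine Finset.sum_congr rfl fun σ _ => ?_
        rw [Finset.mul_sum]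
        exact Finset.sum_congr rfl fun e _ => by ring
    _ ≤ ∑ σ ∈ N.S, s σ * 1 := by
        apply Finset.sum_le_sum
        intro σ hσ
        exact mul_le_mul_of_nonneg_left (hζ.2 σ hσ) (hs0 σ)
    _ = ∑ σ ∈ N.S, s σ := by simp

lemma Network.gam_dot (y : E → ℝ) (x : F → ℝ) :
    ∑ e, y e * (N.Gam *ᵥ x) e = ∑ f, y (N.iota f) * x f := by
  classical
  simp only [Network.Gam, Matrix.mulVec, dotProduct, Matrix.of_apply,
    Finset.mul_sum, ite_mul, one_mul, zero_mul, mul_ite, mul_zero]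
  rw [Finset.sum_comm]
  refine Finset.sum_congr rfl fun f _ => ?_
  simp

lemma Network.CR_convex : Convex ℝ N.CR := by
  intro ζ₁ h1 ζ₂ h2 a b ha hb hab
  refine ⟨⟨fun e => ?_, fun σ hσ => ?_⟩, ?_⟩
  · have := h1.1.1 e; have := h2.1.1 e
    simp only [Pi.add_apply, Pi.smul_apply, smul_eq_mul]
    positivity
  · have e1 := h1.1.2 σ hσ
    have e2 := h2.1.2 σ hσ
    have : ∑ e, (a • ζ₁ + b • ζ₂) e * σ e
        = a * (∑ e, ζ₁ e * σ e) + b * (∑ e, ζ₂ e * σ e) := by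
      simp only [Pi.add_apply, Pi.smul_apply, smul_eq_mul, Finset.mul_sum]
      rw [← Finset.sum_add_distrib]
      exact Finset.sum_congr rfl fun e _ => by ring
    rw [this]
    calc a * (∑ e, ζ₁ e * σ e) + b * (∑ e, ζ₂ e * σ e)
        ≤ a * 1 + b * 1 := by
          exact add_le_add (mul_le_mul_of_nonneg_left e1 ha)
            (mul_le_mul_of_nonneg_left e2 hb)
      _ = 1 := by rw [mul_one, mul_one, hab]
  · have e1 := h1.2
    have e2 := h2.2
    have : ∑ e, N.lamv e * (a • ζ₁ + b • ζ₂) e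
        = a * (∑ e, N.lamv e * ζ₁ e) + b * (∑ e, N.lamv e * ζ₂ e) := by
      simp only [Pi.add_apply, Pi.smul_apply, smul_eq_mul, Finset.mul_sum]
      rw [← Finset.sum_add_distrib]
      exact Finset.sum_congr rfl fun e _ => by ring
    rw [this, e1, e2, ← add_mul, hab, one_mul]

lemma Network.CR_isClosed : IsClosed N.CR := by
  have hrw : N.CR = (⋂ e, {ζ : E → ℝ | 0 ≤ ζ e}) ∩
      ((⋂ σ ∈ N.S, {ζ : E → ℝ | ∑ e, ζ e * σ e ≤ 1}) ∩
       {ζ : E → ℝ | ∑ e, N.lamv e * ζ e = N.DUAL N.lamv}) := by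
    ext ζ
    simp only [Network.CR, Network.dualFeasible, Set.mem_setOf_eq, Set.mem_inter_iff,
      Set.mem_iInter]
    tauto
  rw [hrw]
  refine (isClosed_iInter fun e => isClosed_le continuous_const (continuous_apply e)).inter
    (IsClosed.inter (isClosed_iInter fun σ => isClosed_iInter fun _ => isClosed_le ?_
      continuous_const) (isClosed_eq ?_ continuous_const))
  · exact continuous_finset_sum _ fun e _ => (continuous_apply e).mul continuous_const
  · exact continuous_finset_sum _ fun e _ => continuous_const.mul (continuous_apply e)

lemma Network.CR_isCompact : IsCompact N.CR := by
  refine IsCompact.of_isClosed_subset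
    (isCompact_univ_pi (s := fun _ : E => Set.Icc (0:ℝ) 1) fun _ => isCompact_Icc)
    N.CR_isClosed ?_
  intro ζ hζ
  refine Set.mem_univ_pi.mpr fun e => ?_
  refine ⟨hζ.1.1 e, ?_⟩
  have := hζ.1.2 _ (N.hSsingle e)
  calc ζ e = ∑ e', ζ e' * (if e' = e then (1:ℝ) else 0) := by simp
    _ ≤ 1 := this

end AuxLemmas

/-- Bernoulli-type gradient inequality for `x ^ (1+α)`. -/
lemma bern_aux {α x y : ℝ} (hα : 0 < α) (hx : 0 ≤ x) (hy : 0 ≤ y) :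
    x ^ (1+α) + (1+α) * x ^ α * (y - x) ≤ y ^ (1+α) := by
  rcases hx.eq_or_lt with rfl | hx
  · rw [Real.zero_rpow (by positivity), Real.zero_rpow (by positivity)]
    simpa using Real.rpow_nonneg hy _
  · have hs : (-1:ℝ) ≤ y / x - 1 := by
      have : 0 ≤ y / x := div_nonneg hy hx.le
      linarith
    have hp : (1:ℝ) ≤ 1 + α := by linarith
    have h := one_add_mul_self_le_rpow_one_add hs hp
    have h2 : 1 + (y/x - 1) = y / x := by ring
    rw [h2] at h
    have h3 := mul_le_mul_of_nonneg_left h (le_of_lt (Real.rpow_pos_of_pos hx (1+α)))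
    have hxy : x ^ (1+α) * (y/x) ^ (1+α) = y ^ (1+α) := by
      rw [← Real.mul_rpow hx.le (div_nonneg hy hx.le), mul_div_cancel₀ _ hx.ne']
    have hxa : x ^ (1+α) = x ^ α * x := by
      rw [add_comm, Real.rpow_add hx, Real.rpow_one]
    calc x ^ (1+α) + (1+α) * x ^ α * (y - x)
        = x ^ (1+α) * (1 + (1+α) * (y/x - 1)) := by
          rw [hxa]; field_simp
      _ ≤ x ^ (1+α) * (y/x) ^ (1+α) := h3
      _ = y ^ (1+α) := hxy

/-- transpose shift for dot products. -/
lemma dot_shift {E : Type*} [Fintype E] [DecidableEq E] (A : Matrix E E ℝ) (x y : E → ℝ) :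
    ∑ e, x e * (A *ᵥ y) e = ∑ e, (A.transpose *ᵥ x) e * y e := by
  rw [show ∑ e, x e * (A *ᵥ y) e = x ⬝ᵥ (A *ᵥ y) from rfl, Matrix.dotProduct_mulVec,
    ← Matrix.mulVec_transpose]; rfl

/-- If `(Γρ)ᵀ q^α = max_{π∈S} πᵀ(I-R)q^α` and
`n_f = ρ_f q_{ι(f)}` for all `f`, then `(n,q)` is a fixed point of the lifting
map (critically loaded system, `ΞΓρ > 0`). -/
theorem invariant_conditions_imply_fixed_point
    {E F : Type*} [Fintype E] [Fintype F] [DecidableEq E]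
    (N : Network E F) (α : ℝ) (hα : 0 < α) (hα1 : α ≠ 1)
    (hcrit : N.Leff = 1) (hpos : ∀ e, 0 < N.lamv e)
    (n : F → ℝ) (q : E → ℝ) (hn : ∀ f, 0 ≤ n f) (hq : ∀ e, 0 ≤ q e)
    (hbal : ∑ e, (N.Gam *ᵥ N.rho) e * q e ^ α = N.maxWeight α q)
    (hnq : ∀ f, n f = N.rho f * q (N.iota f)) :
    N.lift α (n, q) = (n, q) := by
  classical
  have hRTnil : IsNilpotent N.R.transpose := by
    obtain ⟨k, hk⟩ := N.hRnil
    exact ⟨k, by rw [← Matrix.transpose_pow, hk, Matrix.transpose_zero]⟩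
  have hunitRT : IsUnit (1 - N.R.transpose) := hRTnil.isUnit_one_sub
  have hdetRT : IsUnit (1 - N.R.transpose).det := (Matrix.isUnit_iff_isUnit_det _).mp hunitRT
  have hunitR : IsUnit (1 - N.R) := N.hRnil.isUnit_one_sub
  have hdetR : IsUnit (1 - N.R).det := (Matrix.isUnit_iff_isUnit_det _).mp hunitR
  have hμpos := N.hμ0
  have hρpos : ∀ f, 0 < N.rho f := fun f => div_pos (N.hν f) (N.hμ0 f)
  set qα : E → ℝ := fun e => q e ^ α with hqα
  set b : E → ℝ := (1 - N.R) *ᵥ qα with hb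
  set W : ℝ := N.maxWeight α q with hWdef
  have hweight : ∀ σ : E → ℝ, N.weight α q σ = ∑ e, σ e * b e := fun σ => rfl
  have hle_W : ∀ σ ∈ N.S, ∑ e, σ e * b e ≤ W := by
    intro σ hσ
    rw [← hweight]
    exact Finset.le_sup' (N.weight α q) hσ
  have hW0 : 0 ≤ W := by
    have h0 := hle_W 0 N.hS0
    simpa using h0
  -- Γρ = (1 - Rᵀ) lamv
  have hGamRho : N.Gam *ᵥ N.rho = (1 - N.R.transpose) *ᵥ N.lamv := by
    rw [Network.lamv, Network.Xi, Matrix.mulVec_mulVec,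
      Matrix.mul_nonsing_inv _ hdetRT, Matrix.one_mulVec]
  have hlam_b : ∑ e, N.lamv e * b e = W := by
    have h1 : ∑ e, N.lamv e * b e = ∑ e, (N.Gam *ᵥ N.rho) e * qα e := by
      rw [hb, show (1 - N.R : Matrix E E ℝ) = (1 - N.R.transpose).transpose by simp,
        dot_shift, Matrix.transpose_transpose, ← hGamRho]
    rw [h1, show (∑ e, (N.Gam *ᵥ N.rho) e * qα e) = ∑ e, (N.Gam *ᵥ N.rho) e * q e ^ α
      from rfl, hbal]
  have key : N.bALGDOpt α n q (n, q) := by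
    refine ⟨⟨hn, hq, fun ζ' _ => le_rfl⟩, ?_⟩
    rintro ⟨n', q'⟩ ⟨hn', hq', hw'⟩
    show N.Lyap α n q ≤ N.Lyap α n' q'
    rcases le_or_gt W 0 with hWle | hWpos
    · -- degenerate case: q = 0 and n = 0
      have hWz : W = 0 := le_antisymm hWle hW0
      have hbsing : ∀ e, b e ≤ 0 := by
        intro e
        have h := hle_W _ (N.hSsingle e)
        simpa [hWz, Finset.sum_ite_eq', ite_mul] using h
      have hbz : ∀ e, b e = 0 := by
        intro e
        have hsum : ∑ e, -(N.lamv e * b e) = 0 := by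
          rw [Finset.sum_neg_distrib, hlam_b, hWz, neg_zero]
        have hnn : ∀ e ∈ Finset.univ, (0:ℝ) ≤ -(N.lamv e * b e) := fun e _ =>
          neg_nonneg.mpr (mul_nonpos_of_nonneg_of_nonpos (hpos e).le (hbsing e))
        have := (Finset.sum_eq_zero_iff_of_nonneg hnn).mp hsum e (Finset.mem_univ e)
        have hl := (hpos e).ne'
        rcases mul_eq_zero.mp (neg_eq_zero.mp this) with h | h
        · exact absurd h hl
        · exact h
      have hqz : ∀ e, q e = 0 := by
        have hfix : qα = N.R *ᵥ qα := by
          have : (1 - N.R) *ᵥ qα = 0 := funext hbz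
          rw [Matrix.sub_mulVec, Matrix.one_mulVec, sub_eq_zero] at this
          exact this
        have hiter : ∀ k : ℕ, qα = (N.R ^ k) *ᵥ qα := by
          intro k
          induction k with
          | zero => simp
          | succ k ih =>
            rw [pow_succ, ← Matrix.mulVec_mulVec, ← hfix, ih]
            rw [← ih]
            exact ih
        obtain ⟨k, hk⟩ := N.hRnil
        have : qα = 0 := by rw [hiter k, hk, Matrix.zero_mulVec]
        intro e
        have he : q e ^ α = 0 := congrFun this e
        exact ((Real.rpow_eq_zero_iff_of_nonneg (hq e)).mp he).1
      have hnz : ∀ f, n f = 0 := fun f => by rw [hnq f, hqz, mul_zero]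
      have hL0 : N.Lyap α n q = 0 := by
        rw [Network.Lyap]
        rw [Finset.sum_eq_zero fun f _ => by
            rw [hnz f, Real.zero_rpow (by positivity), zero_div],
          Finset.sum_eq_zero fun e _ => by rw [hqz e, Real.zero_rpow (by positivity)]]
        ring
      rw [hL0, Network.Lyap]
      have h1 : (0:ℝ) ≤ ∑ f, n' f ^ (1+α) / (N.μ f * N.rho f ^ α) :=
        Finset.sum_nonneg fun f _ => div_nonneg (Real.rpow_nonneg (hn' f) _)
          (mul_nonneg (hμpos f).le (Real.rpow_nonneg (hρpos f).le _))
      have h2 : (0:ℝ) ≤ ∑ e, q' e ^ (1+α) :=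
        Finset.sum_nonneg fun e _ => Real.rpow_nonneg (hq' e) _
      linarith
    · -- main case: W > 0
      set bp : E → ℝ := fun e => max (b e) 0 with hbp
      have hbpσ : ∀ σ ∈ N.S, ∑ e, bp e * σ e ≤ W := by
        intro σ hσ
        set σ' : E → ℝ := fun e => if 0 < b e then σ e else 0 with hσ'def
        have hσ'S : σ' ∈ N.S := by
          refine N.hSmono σ hσ σ' (fun e => ?_) (fun e => ?_)
          · by_cases h : 0 < b e
            · simpa [σ', h] using N.hS01 σ hσ e
            · simp [σ', h]
          · by_cases h : 0 < b e
            · simp [σ', h]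
            · simpa [σ', h] using N.sched_nonneg hσ e
        have heq : ∀ e, bp e * σ e = σ' e * b e := by
          intro e
          by_cases h : 0 < b e
          · simp [hbp, σ', h, max_eq_left h.le, mul_comm]
          · simp [hbp, σ', h, max_eq_right (not_lt.mp h)]
        rw [Finset.sum_congr rfl fun e _ => heq e]
        exact hle_W σ' hσ'S
      have hbpnn : ∀ e, 0 ≤ bp e := fun e => le_max_right _ _
      have hζ₀feas : N.dualFeasible (fun e => bp e / W) := by
        refine ⟨fun e => div_nonneg (hbpnn e) hW0, fun σ hσ => ?_⟩
        have : ∑ e, bp e / W * σ e = (∑ e, bp e * σ e) / W := by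
          rw [Finset.sum_div]
          exact Finset.sum_congr rfl fun e _ => by ring
        rw [this, div_le_one hWpos]
        exact hbpσ σ hσ
      have hwd := N.weak_duality hζ₀feas
      rw [hcrit] at hwd
      have hlam_bp_le : ∑ e, N.lamv e * bp e ≤ W := by
        have : ∑ e, N.lamv e * (bp e / W) = (∑ e, N.lamv e * bp e) / W := by
          rw [Finset.sum_div]
          exact Finset.sum_congr rfl fun e _ => by ring
        rw [this, div_le_one hWpos] at hwd
        exact hwd
      have hlam_bp_ge : W ≤ ∑ e, N.lamv e * bp e := by
        rw [← hlam_b]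
        exact Finset.sum_le_sum fun e _ =>
          mul_le_mul_of_nonneg_left (le_max_left _ _) (hpos e).le
      have hbnn : ∀ e, 0 ≤ b e := by
        intro e
        have hsum0 : ∑ e, N.lamv e * (bp e - b e) = 0 := by
          have : ∑ e, N.lamv e * (bp e - b e)
              = (∑ e, N.lamv e * bp e) - ∑ e, N.lamv e * b e := by
            rw [← Finset.sum_sub_distrib]
            exact Finset.sum_congr rfl fun e _ => by ring
          rw [this, hlam_b]
          linarith [le_antisymm hlam_bp_le hlam_bp_ge]
        have hnn : ∀ e ∈ Finset.univ, (0:ℝ) ≤ N.lamv e * (bp e - b e) := fun e _ =>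
          mul_nonneg (hpos e).le (sub_nonneg.mpr (le_max_left _ _))
        have := (Finset.sum_eq_zero_iff_of_nonneg hnn).mp hsum0 e (Finset.mem_univ e)
        rcases mul_eq_zero.mp this with h | h
        · exact absurd h (hpos e).ne'
        · have : bp e = b e := by linarith [sub_eq_zero.mp h]
          rw [← this]; exact hbpnn e
      have hbp_eq : bp = b := funext fun e => max_eq_left (hbnn e)
      set ζ : E → ℝ := fun e => b e / W with hζdef
      have hζfeas : N.dualFeasible ζ := by rw [hζdef, ← hbp_eq]; exact hζ₀feas
      have hζsum : ∑ e, N.lamv e * ζ e = 1 := by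
        have : ∑ e, N.lamv e * ζ e = (∑ e, N.lamv e * b e) / W := by
          rw [Finset.sum_div]
          exact Finset.sum_congr rfl fun e _ => by rw [hζdef]; ring
        rw [this, hlam_b, div_self hWpos.ne']
      have hDUAL : N.DUAL N.lamv = 1 := by
        have hub : ∀ v ∈ {v | ∃ ζ' : E → ℝ, N.dualFeasible ζ' ∧
            v = ∑ e, N.lamv e * ζ' e}, v ≤ 1 := by
          rintro v ⟨ζ', hf, rfl⟩
          exact le_of_le_of_eq (N.weak_duality hf) hcrit
        have hmem : (1:ℝ) ∈ {v | ∃ ζ' : E → ℝ, N.dualFeasible ζ' ∧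
            v = ∑ e, N.lamv e * ζ' e} := ⟨ζ, hζfeas, hζsum.symm⟩
        exact le_antisymm (csSup_le ⟨1, hmem⟩ hub) (le_csSup ⟨1, hub⟩ hmem)
      have hζCR : ζ ∈ N.CR := ⟨hζfeas, by rw [hDUAL]; exact hζsum⟩
      -- the halfspace argument
      set c : E → ℝ := fun e =>
        (N.Xi *ᵥ (q' + N.Gam *ᵥ fun f => n' f / N.μ f)) e -
        (N.Xi *ᵥ (q + N.Gam *ᵥ fun f => n f / N.μ f)) e with hcdef
      have hwdiff : ∀ ζ' : E → ℝ,
          N.workload ζ' n' q' - N.workload ζ' n q = ∑ e, ζ' e * c e := by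
        intro ζ'
        rw [Network.workload, Network.workload, ← Finset.sum_sub_distrib]
        exact Finset.sum_congr rfl fun e _ => by rw [hcdef]; ring
      have hTconv : Convex ℝ {ζ' : E → ℝ | 0 ≤ ∑ e, ζ' e * c e} := by
        refine convex_halfSpace_ge ⟨fun x y => ?_, fun a x => ?_⟩ 0
        · rw [← Finset.sum_add_distrib]
          exact Finset.sum_congr rfl fun e _ => by simp [add_mul]
        · simp only [Pi.smul_apply, smul_eq_mul, Finset.mul_sum]
          exact Finset.sum_congr rfl fun e _ => by ring
      have hTclosed : IsClosed {ζ' : E → ℝ | 0 ≤ ∑ e, ζ' e * c e} :=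
        isClosed_le continuous_const
          (continuous_finset_sum _ fun e _ => (continuous_apply e).mul continuous_const)
      have hsub : N.CRstar ⊆ {ζ' : E → ℝ | 0 ≤ ∑ e, ζ' e * c e} := by
        intro ζ' hζ'
        have := hw' ζ' hζ'
        simp only [Set.mem_setOf_eq]
        rw [← hwdiff ζ']
        exact sub_nonneg.mpr this
      have hζT : 0 ≤ ∑ e, ζ e * c e := by
        have hKM := closure_convexHull_extremePoints N.CR_isCompact N.CR_convex
        have : N.CR ⊆ {ζ' : E → ℝ | 0 ≤ ∑ e, ζ' e * c e} := by
          rw [← hKM]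
          exact closure_minimal (convexHull_min hsub hTconv) hTclosed
        exact this hζCR
      -- expand b ⬝ c
      have hXib : N.Xi.transpose *ᵥ b = qα := by
        have hXiT : N.Xi.transpose = (1 - N.R)⁻¹ := by
          rw [Network.Xi, Matrix.transpose_nonsing_inv]
          congr 1
          simp
        rw [hXiT, hb, Matrix.mulVec_mulVec, Matrix.nonsing_inv_mul _ hdetR,
          Matrix.one_mulVec]
      have hqdot : ∀ (v : E → ℝ), ∑ e, b e * (N.Xi *ᵥ v) e = ∑ e, qα e * v e := by
        intro v
        rw [dot_shift, hXib]
      have hbc : ∑ e, b e * c e =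
          (∑ f, qα (N.iota f) * (n' f / N.μ f) + ∑ e, qα e * q' e) -
          (∑ f, qα (N.iota f) * (n f / N.μ f) + ∑ e, qα e * q e) := by
        have h1 : ∑ e, b e * c e =
            ∑ e, b e * (N.Xi *ᵥ (q' + N.Gam *ᵥ fun f => n' f / N.μ f)) e -
            ∑ e, b e * (N.Xi *ᵥ (q + N.Gam *ᵥ fun f => n f / N.μ f)) e := by
          rw [← Finset.sum_sub_distrib]
          exact Finset.sum_congr rfl fun e _ => by rw [hcdef]; ring
        have h2 : ∀ (x : F → ℝ) (y : E → ℝ),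
            ∑ e, qα e * (y + N.Gam *ᵥ x) e = ∑ e, qα e * y e + ∑ f, qα (N.iota f) * x f := by
          intro x y
          have := N.gam_dot qα x
          simp only [Pi.add_apply, mul_add, Finset.sum_add_distrib]
          rw [this]
        rw [h1, hqdot, hqdot, h2, h2]
        ring
      -- the directional derivative is nonnegative
      have hD : 0 ≤ (∑ f, qα (N.iota f) * ((n' f - n f) / N.μ f)) +
          ∑ e, qα e * (q' e - q e) := by
        have hzc : ∑ e, b e * c e = W * ∑ e, ζ e * c e := by
          rw [Finset.mul_sum]
          exact Finset.sum_congr rfl fun e _ => by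
            rw [hζdef]; field_simp
        have e1 : ∑ f, qα (N.iota f) * ((n' f - n f) / N.μ f)
            = ∑ f, qα (N.iota f) * (n' f / N.μ f) - ∑ f, qα (N.iota f) * (n f / N.μ f) := by
          rw [← Finset.sum_sub_distrib]
          exact Finset.sum_congr rfl fun f _ => by rw [sub_div, mul_sub]
        have e2 : ∑ e, qα e * (q' e - q e) = ∑ e, qα e * q' e - ∑ e, qα e * q e := by
          rw [← Finset.sum_sub_distrib]
          exact Finset.sum_congr rfl fun e _ => by rw [mul_sub]
        have hbc' : ∑ e, b e * c e =
            (∑ f, qα (N.iota f) * ((n' f - n f) / N.μ f)) + ∑ e, qα e * (q' e - q e) := by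
          rw [hbc, e1, e2]; ring
        rw [← hbc', hzc]
        exact mul_nonneg hWpos.le hζT
      -- pointwise convexity inequalities
      have h1 : ∀ f, n f ^ (1+α) / (N.μ f * N.rho f ^ α)
          + (1+α) * (qα (N.iota f) * ((n' f - n f) / N.μ f))
          ≤ n' f ^ (1+α) / (N.μ f * N.rho f ^ α) := by
        intro f
        have hber := bern_aux hα (hn f) (hn' f)
        have hna : n f ^ α = N.rho f ^ α * qα (N.iota f) := by
          rw [hqα, hnq f, Real.mul_rpow (hρpos f).le (hq _)]
        have hden : 0 < N.μ f * N.rho f ^ α :=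
          mul_pos (hμpos f) (Real.rpow_pos_of_pos (hρpos f) α)
        have hρα : (0:ℝ) < N.rho f ^ α := Real.rpow_pos_of_pos (hρpos f) α
        have hμne : N.μ f ≠ 0 := (hμpos f).ne'
        have hραne : N.rho f ^ α ≠ 0 := hρα.ne'
        have hL : n f ^ (1+α) / (N.μ f * N.rho f ^ α)
            + (1+α) * (qα (N.iota f) * ((n' f - n f) / N.μ f))
            = (n f ^ (1+α) + (1+α) * n f ^ α * (n' f - n f)) / (N.μ f * N.rho f ^ α) := by
          rw [hna]
          field_simp
        rw [hL]
        gcongr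
      have h2 : ∀ e, q e ^ (1+α) + (1+α) * (qα e * (q' e - q e)) ≤ q' e ^ (1+α) := by
        intro e
        have hber := bern_aux hα (hq e) (hq' e)
        have : (1+α) * (qα e * (q' e - q e)) = (1+α) * q e ^ α * (q' e - q e) := by
          rw [hqα]; ring
        rw [this]
        exact hber
      -- sum up
      have hexp : N.Lyap α n q + (1+α) * ((∑ f, qα (N.iota f) * ((n' f - n f) / N.μ f)) +
            ∑ e, qα e * (q' e - q e))
          = (∑ f, (n f ^ (1+α) / (N.μ f * N.rho f ^ α)
              + (1+α) * (qα (N.iota f) * ((n' f - n f) / N.μ f))))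
            + ∑ e, (q e ^ (1+α) + (1+α) * (qα e * (q' e - q e))) := by
        rw [Network.Lyap]
        simp only [Finset.sum_add_distrib]
        rw [← Finset.mul_sum, ← Finset.mul_sum]
        ring
      have hfinal : (∑ f, (n f ^ (1+α) / (N.μ f * N.rho f ^ α)
            + (1+α) * (qα (N.iota f) * ((n' f - n f) / N.μ f))))
          + ∑ e, (q e ^ (1+α) + (1+α) * (qα e * (q' e - q e))) ≤ N.Lyap α n' q' := by
        rw [Network.Lyap]
        exact add_le_add (Finset.sum_le_sum fun f _ => h1 f)
          (Finset.sum_le_sum fun e _ => h2 e)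
      have hstep : N.Lyap α n q ≤ N.Lyap α n q
          + (1+α) * ((∑ f, qα (N.iota f) * ((n' f - n f) / N.μ f)) +
            ∑ e, qα e * (q' e - q e)) :=
        le_add_of_nonneg_right (mul_nonneg (by positivity) hD)
      exact hstep.trans (hexp.le.trans hfinal)
  rcases em (∃! p', N.bALGDOpt α n q p') with h | h
  · have h1 : N.lift α (n, q) = h.choose := by
      rw [Network.lift]
      exact dif_pos h
    rw [h1, ← h.choose_spec.2 (n, q) key]
  · rw [Network.lift]
    exact dif_neg h
end
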